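/- arXiv:1205.6603 — 6 statements merged into one kernel-verified Lean document; each statement's English description precedes it below -/
import Mathlib

section
/- Let f : ℝ³ → [0,∞) be measurable, not almost everywhere zero, with ∫_{ℝ³} (1+|q|) f(q) dq < ∞. Then (∫_{ℝ³} f(q) dq/q⁰)² + Σ_{i=1}^{3} (∫_{ℝ³} qⁱ f(q) dq/q⁰)² < (∫_{ℝ³} f(q) dq)². In particular, the proper particle density n_f := √( (∫ f dq)² − Σ_{i=1}^{3} (∫ qⁱ f dq/q⁰)² ) is a well-defined strictly positive real number, and the quantity α_f := (1/n_f) ∫_{ℝ³} f(q) dq/q⁰ satisfies 0 < α_f < 1. -/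
open MeasureTheory Real
open scoped InnerProductSpace

noncomputable section

/-- Momentum space `ℝ³`. -/
abbrev E3 := EuclideanSpace ℝ (Fin 3)

/-- `q⁰ = √(1+|q|²)`. -/
def q0 (q : E3) : ℝ := Real.sqrt (1 + ‖q‖ ^ 2)

/-- Modified Bessel function `K_j(β) = ∫₀^∞ cosh(j r) exp(−β cosh r) dr`. -/
def Kb (j : ℕ) (β : ℝ) : ℝ :=
  ∫ r in Set.Ioi (0 : ℝ), Real.cosh (j * r) * Real.exp (-β * Real.cosh r)

end


section Aux

lemma q0_pos (q : E3) : 0 < q0 q := Real.sqrt_pos.2 (by positivity)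

lemma one_le_q0 (q : E3) : 1 ≤ q0 q :=
  Real.one_le_sqrt.2 (le_add_of_nonneg_right (by positivity))

lemma q0_sq (q : E3) : q0 q ^ 2 = 1 + ‖q‖ ^ 2 := Real.sq_sqrt (by positivity)

lemma q0_cont : Continuous q0 :=
  Real.continuous_sqrt.comp (continuous_const.add (continuous_norm.pow 2))

lemma coord_meas (i : Fin 3) : Measurable (fun q : E3 => q i) :=
  (EuclideanSpace.proj i : E3 →L[ℝ] ℝ).continuous.measurable

lemma norm_sq_eq_sum (q : E3) : ‖q‖ ^ 2 = ∑ i : Fin 3, q i ^ 2 := by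
  rw [EuclideanSpace.norm_eq, Real.sq_sqrt (by positivity)]
  congr 1; funext i; rw [Real.norm_eq_abs, sq_abs]

lemma abs_coord_le (q : E3) (i : Fin 3) : |q i| ≤ ‖q‖ := by
  have h1 : |q i| ^ 2 ≤ ‖q‖ ^ 2 := by
    rw [sq_abs, norm_sq_eq_sum]
    exact Finset.single_le_sum (f := fun j => q j ^ 2)
      (fun j _ => by positivity) (Finset.mem_univ i)
  have := Real.sqrt_le_sqrt h1
  rwa [Real.sqrt_sq (abs_nonneg _), Real.sqrt_sq (norm_nonneg _)] at this

section Int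
variable {f : E3 → ℝ} (hmeas : Measurable f) (hnonneg : ∀ q, 0 ≤ f q)
  (hint : Integrable (fun q => (1 + ‖q‖) * f q))

include hmeas hnonneg hint

lemma int_f : Integrable f := by
  refine hint.mono hmeas.aestronglyMeasurable (ae_of_all _ fun q => ?_)
  rw [Real.norm_eq_abs, Real.norm_eq_abs, abs_of_nonneg (hnonneg q),
    abs_of_nonneg (mul_nonneg (by positivity) (hnonneg q))]
  nlinarith [hnonneg q, norm_nonneg q]

lemma int_f_div : Integrable (fun q => f q / q0 q) := by
  refine (int_f hmeas hnonneg hint).mono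
    (hmeas.div q0_cont.measurable).aestronglyMeasurable (ae_of_all _ fun q => ?_)
  rw [Real.norm_eq_abs, Real.norm_eq_abs, abs_of_nonneg (hnonneg q),
    abs_of_nonneg (div_nonneg (hnonneg q) (q0_pos q).le)]
  exact div_le_self (hnonneg q) (one_le_q0 q)

lemma int_coord (i : Fin 3) : Integrable (fun q => q i * f q / q0 q) := by
  refine hint.mono (((coord_meas i).mul hmeas).div q0_cont.measurable).aestronglyMeasurable
    (ae_of_all _ fun q => ?_)
  rw [Real.norm_eq_abs, Real.norm_eq_abs, abs_div, abs_mul,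
    abs_of_nonneg (hnonneg q), abs_of_nonneg (q0_pos q).le,
    abs_of_nonneg (mul_nonneg (by positivity) (hnonneg q))]
  have h1 : |q i| * f q / q0 q ≤ |q i| * f q :=
    div_le_self (mul_nonneg (abs_nonneg _) (hnonneg q)) (one_le_q0 q)
  have h2 : |q i| * f q ≤ (1 + ‖q‖) * f q := by
    have := abs_coord_le q i
    nlinarith [hnonneg q, norm_nonneg q]
  linarith

lemma f_div_pos (hne : ¬ f =ᵐ[(volume : Measure E3)] 0) :
    0 < ∫ q : E3, f q / q0 q := by
  rw [integral_pos_iff_support_of_nonneg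
    (fun q => div_nonneg (hnonneg q) (q0_pos q).le) (int_f_div hmeas hnonneg hint)]
  have hsupp : Function.support (fun q => f q / q0 q) = Function.support f := by
    ext q
    simp only [Function.mem_support, ne_eq, div_eq_zero_iff, not_or]
    constructor
    · tauto
    · exact fun h => ⟨h, (q0_pos q).ne'⟩
  rw [hsupp]
  by_contra h
  push_neg at h
  have h0 : volume (Function.support f) = 0 := le_antisymm h zero_le
  refine hne ?_
  rw [Filter.EventuallyEq, ae_iff]
  simp only [Pi.zero_apply]
  exact h0

end Int
end Aux

section Key
variable {f : E3 → ℝ} (hmeas : Measurable f) (hnonneg : ∀ q, 0 ≤ f q)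
  (hint : Integrable (fun q => (1 + ‖q‖) * f q))

include hmeas hnonneg hint

lemma f_int_pos (hne : ¬ f =ᵐ[(volume : Measure E3)] 0) : 0 < ∫ q : E3, f q := by
  rw [integral_pos_iff_support_of_nonneg hnonneg (int_f hmeas hnonneg hint)]
  by_contra h
  push_neg at h
  have h0 : volume (Function.support f) = 0 := le_antisymm h zero_le
  refine hne ?_
  rw [Filter.EventuallyEq, ae_iff]
  simp only [Pi.zero_apply]
  exact h0

lemma key (hne : ¬ f =ᵐ[(volume : Measure E3)] 0) :
    (∫ q : E3, f q / q0 q) ^ 2 + (∑ i : Fin 3, (∫ q : E3, q i * f q / q0 q) ^ 2)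
        < (∫ q : E3, f q) ^ 2 := by
  set A := ∫ q : E3, f q / q0 q with hA
  set C := ∫ q : E3, f q with hC
  set B : Fin 3 → ℝ := fun i => ∫ q : E3, q i * f q / q0 q with hB
  show A ^ 2 + ∑ i : Fin 3, B i ^ 2 < C ^ 2
  have hApos : 0 < A := f_div_pos hmeas hnonneg hint hne
  have hCpos : 0 < C := f_int_pos hmeas hnonneg hint hne
  set y : EuclideanSpace ℝ (Fin 4) :=
    (WithLp.equiv 2 (Fin 4 → ℝ)).symm (Fin.cons A B) with hy
  set u : E3 → EuclideanSpace ℝ (Fin 4) :=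
    fun q => (WithLp.equiv 2 (Fin 4 → ℝ)).symm (Fin.cons 1 (fun i => q i)) with hu
  set N : ℝ := ‖y‖ with hNdef
  have hnormu : ∀ q : E3, ‖u q‖ = q0 q := by
    intro q
    rw [EuclideanSpace.norm_eq, q0]
    congr 1
    rw [Fin.sum_univ_succ]
    simp only [hu, WithLp.equiv_symm_apply, PiLp.toLp_apply, Fin.cons_zero, Fin.cons_succ,
      norm_one, one_pow, Real.norm_eq_abs, sq_abs]
    rw [norm_sq_eq_sum]
  have hip : ∀ q : E3, ⟪u q, y⟫_ℝ = A + ∑ i : Fin 3, q i * B i := by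
    intro q
    rw [PiLp.inner_apply, Fin.sum_univ_succ]
    simp only [hu, hy, WithLp.equiv_symm_apply, PiLp.toLp_apply, Fin.cons_zero, Fin.cons_succ,
      RCLike.inner_apply, conj_trivial, one_mul]
    simp only [mul_one, mul_comm]
    rw [one_mul]
  have hN2 : N ^ 2 = A ^ 2 + ∑ i : Fin 3, B i ^ 2 := by
    rw [hNdef, EuclideanSpace.norm_eq, Real.sq_sqrt (by positivity)]
    rw [Fin.sum_univ_succ]
    simp only [hy, WithLp.equiv_symm_apply, PiLp.toLp_apply, Fin.cons_zero, Fin.cons_succ,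
      Real.norm_eq_abs, sq_abs]
  have hNpos : 0 < N := by
    have : 0 < N ^ 2 := by rw [hN2]; positivity
    nlinarith [norm_nonneg y]
  set g : E3 → ℝ := fun q => (N - ⟪u q, y⟫_ℝ / q0 q) * f q with hg
  have hg_nonneg : ∀ q, 0 ≤ g q := by
    intro q
    refine mul_nonneg ?_ (hnonneg q)
    have h1 : ⟪u q, y⟫_ℝ ≤ ‖u q‖ * ‖y‖ := real_inner_le_norm (u q) y
    rw [hnormu q] at h1
    rw [sub_nonneg, div_le_iff₀ (q0_pos q)]
    linarith
  have hg_eq : g = fun q =>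
      N * f q - (A * (f q / q0 q) + ∑ i : Fin 3, B i * (q i * f q / q0 q)) := by
    funext q
    rw [hg]
    simp only
    rw [hip q]
    have h0 : q0 q ≠ 0 := (q0_pos q).ne'
    have hsum : ∑ i : Fin 3, B i * (q i * f q / q0 q)
        = (∑ i : Fin 3, q i * B i) * (f q / q0 q) := by
      rw [Finset.sum_mul]
      exact Finset.sum_congr rfl fun i _ => by ring
    rw [hsum]
    field_simp
  have hg_int : Integrable g := by
    rw [hg_eq]
    exact ((int_f hmeas hnonneg hint).const_mul N).sub
      (((int_f_div hmeas hnonneg hint).const_mul A).add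
        (integrable_finset_sum _ fun i _ =>
          (int_coord hmeas hnonneg hint i).const_mul (B i)))
  have hBi : ∀ i : Fin 3, B i = ∫ q : E3, q i * f q / q0 q := fun i => rfl
  have hint1 : Integrable (fun q : E3 => N * f q) :=
    (int_f hmeas hnonneg hint).const_mul N
  have hint2 : Integrable (fun q : E3 => A * (f q / q0 q)) :=
    (int_f_div hmeas hnonneg hint).const_mul A
  have hint3 : Integrable (fun q : E3 => ∑ i : Fin 3, B i * (q i * f q / q0 q)) :=
    integrable_finset_sum _ fun i _ => (int_coord hmeas hnonneg hint i).const_mul (B i)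
  have hint4 : Integrable (fun q : E3 =>
      A * (f q / q0 q) + ∑ i : Fin 3, B i * (q i * f q / q0 q)) := hint2.add hint3
  have hg_val : ∫ q : E3, g q = N * C - (A ^ 2 + ∑ i : Fin 3, B i ^ 2) := by
    rw [hg_eq]
    rw [integral_sub hint1 hint4, integral_add hint2 hint3,
      integral_finset_sum _ fun i _ => (int_coord hmeas hnonneg hint i).const_mul (B i)]
    simp only [integral_const_mul]
    rw [← hA, ← hC]
    simp only [← hBi]
    ring
  have hIg_pos : 0 < ∫ q : E3, g q := by
    rcases (integral_nonneg (show (0 : E3 → ℝ) ≤ g from hg_nonneg)).lt_or_eq with h | h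
    · exact h
    · exfalso
      have hg0 : g =ᵐ[(volume : Measure E3)] 0 :=
        (integral_eq_zero_iff_of_nonneg hg_nonneg hg_int).1 h.symm
      set q' : E3 := (WithLp.equiv 2 (Fin 3 → ℝ)).symm (fun i => B i / A) with hq'
      have hsingle : ∀ᵐ q : E3, q ≠ q' := by
        rw [ae_iff]
        simp only [ne_eq, not_not, Set.setOf_eq_eq_singleton]
        exact measure_singleton q'
      refine hne ?_
      filter_upwards [hg0, hsingle] with q hgq hqne
      simp only [Pi.zero_apply] at hgq ⊢
      by_contra hfq
      have hfactor : N - ⟪u q, y⟫_ℝ / q0 q = 0 := by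
        rcases mul_eq_zero.1 hgq with h' | h'
        · exact h'
        · exact absurd h' hfq
      have hipeq : ⟪u q, y⟫_ℝ = ‖u q‖ * ‖y‖ := by
        rw [hnormu q, ← hNdef]
        have : ⟪u q, y⟫_ℝ = N * q0 q := by
          rw [sub_eq_zero] at hfactor
          rw [hfactor, div_mul_cancel₀ _ (q0_pos q).ne']
        rw [this]; ring
      have hpar := inner_eq_norm_mul_iff_real.1 hipeq
      rw [hnormu q, ← hNdef] at hpar
      have h0 : (N • u q) 0 = (q0 q • y) 0 := by rw [hpar]
      have hi : ∀ i : Fin 3, (N • u q) i.succ = (q0 q • y) i.succ := by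
        intro i; rw [hpar]
      simp only [PiLp.smul_apply, hu, hy, WithLp.equiv_symm_apply, PiLp.toLp_apply,
        Fin.cons_zero, Fin.cons_succ, smul_eq_mul, mul_one] at h0 hi
      refine hqne ((WithLp.equiv 2 (Fin 3 → ℝ)).injective (funext fun i => ?_))
      show q i = B i / A
      have hqi := hi i
      have hq0 : (0:ℝ) < q0 q := q0_pos q
      have h3 : q0 q * (q i * A) = q0 q * B i := by
        calc q0 q * (q i * A) = (q0 q * A) * q i := by ring
          _ = N * q i := by rw [h0]
          _ = q0 q * B i := hqi
      rw [eq_div_iff hApos.ne']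
      exact mul_left_cancel₀ hq0.ne' h3
  rw [hg_val] at hIg_pos
  have hNC : N < C := by
    have : N * N < N * C := by nlinarith [hN2]
    exact lt_of_mul_lt_mul_left this hNpos.le
  calc A ^ 2 + ∑ i : Fin 3, B i ^ 2 = N ^ 2 := hN2.symm
    _ < C ^ 2 := by nlinarith
end Key


/-- for any measurable nonnegative `f`, not a.e. zero, with
`∫ (1+|q|) f < ∞`, one has
`(∫ f/q⁰)² + Σᵢ (∫ qⁱ f/q⁰)² < (∫ f)²`; in particular the proper particle density
`n_f = √((∫ f)² − Σᵢ (∫ qⁱ f/q⁰)²)` is strictly positive and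
`α_f = (1/n_f) ∫ f/q⁰` satisfies `0 < α_f < 1`. -/
theorem proper_density_positive (f : E3 → ℝ)
    (hmeas : Measurable f) (hnonneg : ∀ q, 0 ≤ f q)
    (hne : ¬ f =ᵐ[(volume : Measure E3)] 0)
    (hint : Integrable (fun q => (1 + ‖q‖) * f q)) :
    (∫ q : E3, f q / q0 q) ^ 2 + (∑ i : Fin 3, (∫ q : E3, q i * f q / q0 q) ^ 2)
        < (∫ q : E3, f q) ^ 2 ∧
      0 < Real.sqrt ((∫ q : E3, f q) ^ 2 - ∑ i : Fin 3, (∫ q : E3, q i * f q / q0 q) ^ 2) ∧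
      0 < (∫ q : E3, f q / q0 q) /
          Real.sqrt ((∫ q : E3, f q) ^ 2 - ∑ i : Fin 3, (∫ q : E3, q i * f q / q0 q) ^ 2) ∧
      (∫ q : E3, f q / q0 q) /
          Real.sqrt ((∫ q : E3, f q) ^ 2 - ∑ i : Fin 3, (∫ q : E3, q i * f q / q0 q) ^ 2)
        < 1 := by
  have hkey := key hmeas hnonneg hint hne
  have hApos : 0 < ∫ q : E3, f q / q0 q := f_div_pos hmeas hnonneg hint hne
  set A := ∫ q : E3, f q / q0 q with hA
  set S := (∫ q : E3, f q) ^ 2 - ∑ i : Fin 3, (∫ q : E3, q i * f q / q0 q) ^ 2 with hS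
  have hAS : A ^ 2 < S := by rw [hS]; linarith [hkey]
  have hSpos : 0 < S := lt_of_le_of_lt (by positivity) hAS
  have hsqrt : 0 < Real.sqrt S := Real.sqrt_pos.2 hSpos
  refine ⟨hkey, hsqrt, div_pos hApos hsqrt, ?_⟩
  rw [div_lt_one hsqrt]
  exact (Real.lt_sqrt hApos.le).2 hAS
end

section
/- The function β ↦ K₁(β)/K₂(β) is strictly increasing on (0,∞); that is, its derivative satisfies (K₁/K₂)'(β) > 0 for every β > 0. -/
open MeasureTheory Real
open scoped InnerProductSpace

section Aux
open Set

noncomputable def In (n : ℕ) (β : ℝ) : ℝ :=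
  ∫ r in Set.Ioi (0:ℝ), Real.cosh r ^ n * Real.exp (-β * Real.cosh r)

lemma pow_le_exp_aux {t d : ℝ} (ht : 0 ≤ t) (hd : 0 < d) (n : ℕ) :
    t ^ n ≤ (n / d) ^ n * Real.exp (d * t) := by
  rcases Nat.eq_zero_or_pos n with h | h
  · simp [h]
    have : (0:ℝ) ≤ d * t := by positivity
    linarith [Real.add_one_le_exp (d*t)]
  · have hn : (0:ℝ) < n := by exact_mod_cast h
    have h1 : t ≤ (n / d) * Real.exp (d * t / n) := by
      have := Real.add_one_le_exp (d * t / n)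
      have h2 : d * t / n ≤ Real.exp (d * t / n) := by linarith
      calc t = (n / d) * (d * t / n) := by field_simp
        _ ≤ (n / d) * Real.exp (d * t / n) := by
            apply mul_le_mul_of_nonneg_left h2; positivity
    calc t ^ n ≤ ((n / d) * Real.exp (d * t / n)) ^ n :=
          pow_le_pow_left₀ ht h1 n
      _ = (n / d) ^ n * Real.exp (d * t / n) ^ n := mul_pow _ _ _
      _ = (n / d) ^ n * Real.exp (d * t) := by
          rw [← Real.exp_nat_mul]
          congr 1
          field_simp

lemma self_le_cosh {r : ℝ} (hr : 0 ≤ r) : r ≤ Real.cosh r :=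
  le_trans (Real.self_le_sinh_iff.2 hr) (Real.sinh_lt_cosh r).le

lemma In_integrable (n : ℕ) {c : ℝ} (hc : 0 < c) :
    IntegrableOn (fun r => Real.cosh r ^ n * Real.exp (-c * Real.cosh r)) (Ioi (0:ℝ)) := by
  have hmeas : AEStronglyMeasurable (fun r => Real.cosh r ^ n * Real.exp (-c * Real.cosh r))
      (volume.restrict (Ioi (0:ℝ))) := (((Real.continuous_cosh.pow n).mul
        ((continuous_const.mul Real.continuous_cosh).rexp)).aestronglyMeasurable)
  apply Integrable.mono' (((exp_neg_integrableOn_Ioi 0 (half_pos hc)).const_mul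
    ((n / (c/2)) ^ n))) hmeas
  filter_upwards [ae_restrict_mem measurableSet_Ioi] with r hr
  have h1 : (1:ℝ) ≤ Real.cosh r := Real.one_le_cosh r
  have h0 : (0:ℝ) ≤ Real.cosh r := by linarith
  rw [Real.norm_eq_abs, abs_of_nonneg (by positivity)]
  have key : Real.cosh r ^ n ≤ (n / (c/2)) ^ n * Real.exp (c/2 * Real.cosh r) :=
    pow_le_exp_aux h0 (half_pos hc) n
  have h2 : Real.cosh r ^ n * Real.exp (-c * Real.cosh r)
      ≤ (n / (c/2)) ^ n * Real.exp (-(c/2) * Real.cosh r) := by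
    have := mul_le_mul_of_nonneg_right key (Real.exp_pos (-c * Real.cosh r)).le
    calc Real.cosh r ^ n * Real.exp (-c * Real.cosh r)
        ≤ (n / (c/2)) ^ n * Real.exp (c/2 * Real.cosh r) * Real.exp (-c * Real.cosh r) := this
      _ = (n / (c/2)) ^ n * Real.exp (-(c/2) * Real.cosh r) := by
          rw [mul_assoc, ← Real.exp_add]; ring_nf
  refine h2.trans ?_
  apply mul_le_mul_of_nonneg_left _ (by positivity)
  apply Real.exp_le_exp.2
  have := self_le_cosh (le_of_lt hr)
  nlinarith [half_pos hc]

lemma In_pos (n : ℕ) {β : ℝ} (hβ : 0 < β) : 0 < In n β := by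
  rw [In, setIntegral_pos_iff_support_of_nonneg_ae]
  · have : Function.support (fun r => Real.cosh r ^ n * Real.exp (-β * Real.cosh r)) = univ := by
      ext r
      simp only [Function.mem_support, mem_univ, iff_true]
      have := Real.one_le_cosh r
      positivity
    rw [this, univ_inter]
    simp
  · filter_upwards with r
    have := Real.one_le_cosh r
    positivity
  · exact In_integrable n hβ

lemma In_hasDeriv (n : ℕ) {β : ℝ} (hβ : 0 < β) :
    HasDerivAt (In n) (-(In (n+1) β)) β := by
  have hε : 0 < β / 2 := half_pos hβ
  have key := hasDerivAt_integral_of_dominated_loc_of_deriv_le (μ := volume.restrict (Ioi (0:ℝ)))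
    (F := fun x r => Real.cosh r ^ n * Real.exp (-x * Real.cosh r))
    (F' := fun x r => -(Real.cosh r ^ (n+1) * Real.exp (-x * Real.cosh r)))
    (bound := fun r => Real.cosh r ^ (n+1) * Real.exp (-(β/2) * Real.cosh r))
    (x₀ := β) (Metric.ball_mem_nhds β hε) ?_ ?_ ?_ ?_ ?_ ?_
  · have h2 := key.2
    have : (∫ r in Ioi (0:ℝ), -(Real.cosh r ^ (n+1) * Real.exp (-β * Real.cosh r)))
        = -(In (n+1) β) := by
      rw [integral_neg]; rfl
    rw [this] at h2
    exact h2
  · filter_upwards with x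
    exact (((Real.continuous_cosh.pow n).mul
      ((continuous_const.mul Real.continuous_cosh).rexp)).aestronglyMeasurable)
  · exact In_integrable n hβ
  · exact (((Real.continuous_cosh.pow (n+1)).mul
      ((continuous_const.mul Real.continuous_cosh).rexp)).aestronglyMeasurable).neg
  · filter_upwards [ae_restrict_mem measurableSet_Ioi] with r _
    intro x hx
    rw [Metric.mem_ball, Real.dist_eq, abs_lt] at hx
    have hxpos : β / 2 ≤ x := by linarith [hx.1]
    have h1 := Real.one_le_cosh r
    rw [norm_neg, Real.norm_eq_abs, abs_of_nonneg (by positivity)]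
    apply mul_le_mul_of_nonneg_left _ (by positivity)
    apply Real.exp_le_exp.2
    nlinarith
  · exact In_integrable (n+1) hε
  · filter_upwards with r
    intro x _
    have : HasDerivAt (fun y : ℝ => -y * Real.cosh r) (-Real.cosh r) x := by
      simpa using ((hasDerivAt_id x).neg.mul_const (Real.cosh r))
    have h2 := (this.exp).const_mul (Real.cosh r ^ n)
    exact h2.congr_deriv (by ring)

lemma Kb_one : Kb 1 = In 1 := by
  funext β; unfold Kb In; norm_num

lemma Kb_two {β : ℝ} (hβ : 0 < β) : Kb 2 β = 2 * In 2 β - In 0 β := by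
  rw [Kb]
  have h : ∀ r : ℝ, Real.cosh ((2:ℕ) * r) * Real.exp (-β * Real.cosh r)
      = 2 * (Real.cosh r ^ 2 * Real.exp (-β * Real.cosh r))
        - Real.cosh r ^ 0 * Real.exp (-β * Real.cosh r) := by
    intro r; push_cast; rw [Real.cosh_two_mul]
    linear_combination -Real.exp (-β * Real.cosh r) * Real.cosh_sq_sub_sinh_sq r
  simp_rw [h]
  rw [integral_sub ((In_integrable 2 hβ).const_mul 2) (In_integrable 0 hβ),
    integral_const_mul]
  rfl

lemma Kb_two_pos {β : ℝ} (hβ : 0 < β) : 0 < Kb 2 β := by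
  rw [Kb_two hβ]
  have hle : In 0 β ≤ In 2 β := by
    apply integral_mono (In_integrable 0 hβ) (In_integrable 2 hβ)
    intro r
    have h1 := Real.one_le_cosh r
    have he := Real.exp_pos (-β * Real.cosh r)
    have h2 : (1:ℝ) ≤ Real.cosh r ^ 2 := by nlinarith
    simp only [pow_zero]
    nlinarith [mul_le_mul_of_nonneg_right h2 he.le]
  linarith [In_pos 2 hβ]

noncomputable def gg (β : ℝ) (n : ℕ) (r : ℝ) : ℝ :=
  Real.cosh r ^ n * Real.exp (-β * Real.cosh r)

noncomputable def HH (β : ℝ) (p : ℝ × ℝ) : ℝ :=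
  ((((gg β 1 p.1 * gg β 3 p.2 + gg β 3 p.1 * gg β 1 p.2)
    - 2 * (gg β 2 p.1 * gg β 2 p.2)) - gg β 1 p.1 * gg β 1 p.2)
    + (1/2) * (gg β 0 p.1 * gg β 2 p.2)) + (1/2) * (gg β 2 p.1 * gg β 0 p.2)

lemma HH_eq (β : ℝ) (p : ℝ × ℝ) :
    HH β p = 1/2 * (Real.exp (-β * Real.cosh p.1) * Real.exp (-β * Real.cosh p.2))
      * ((Real.cosh p.1 - Real.cosh p.2)^2 * (2 * Real.cosh p.1 * Real.cosh p.2 + 1)) := by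
  simp only [HH, gg]; ring

lemma HH_nonneg (β : ℝ) (p : ℝ × ℝ) : 0 ≤ HH β p := by
  rw [HH_eq]
  have h1 := Real.one_le_cosh p.1
  have h2 := Real.one_le_cosh p.2
  have e1 := Real.exp_pos (-β * Real.cosh p.1)
  have e2 := Real.exp_pos (-β * Real.cosh p.2)
  have : (0:ℝ) ≤ 2 * Real.cosh p.1 * Real.cosh p.2 + 1 := by nlinarith
  positivity

lemma key_pos {β : ℝ} (hβ : 0 < β) :
    0 < 2 * In 1 β * In 3 β + In 0 β * In 2 β - 2 * (In 2 β)^2 - (In 1 β)^2 := by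
  set μ := volume.restrict (Ioi (0:ℝ)) with hμ
  have hint : ∀ n : ℕ, Integrable (gg β n) μ := fun n => In_integrable n hβ
  have HI : Integrable (HH β) (μ.prod μ) :=
    ((((((hint 1).mul_prod (hint 3)).add ((hint 3).mul_prod (hint 1))).sub
      (((hint 2).mul_prod (hint 2)).const_mul 2)).sub ((hint 1).mul_prod (hint 1))).add
      (((hint 0).mul_prod (hint 2)).const_mul (1/2))).add
      (((hint 2).mul_prod (hint 0)).const_mul (1/2))
  have i13 : Integrable (fun p : ℝ×ℝ => gg β 1 p.1 * gg β 3 p.2) (μ.prod μ) := (hint 1).mul_prod (hint 3)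
  have i31 : Integrable (fun p : ℝ×ℝ => gg β 3 p.1 * gg β 1 p.2) (μ.prod μ) := (hint 3).mul_prod (hint 1)
  have i22 : Integrable (fun p : ℝ×ℝ => 2 * (gg β 2 p.1 * gg β 2 p.2)) (μ.prod μ) := ((hint 2).mul_prod (hint 2)).const_mul 2
  have i11 : Integrable (fun p : ℝ×ℝ => gg β 1 p.1 * gg β 1 p.2) (μ.prod μ) := (hint 1).mul_prod (hint 1)
  have i02 : Integrable (fun p : ℝ×ℝ => (1/2 : ℝ) * (gg β 0 p.1 * gg β 2 p.2)) (μ.prod μ) := ((hint 0).mul_prod (hint 2)).const_mul (1/2)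
  have i20 : Integrable (fun p : ℝ×ℝ => (1/2 : ℝ) * (gg β 2 p.1 * gg β 0 p.2)) (μ.prod μ) := ((hint 2).mul_prod (hint 0)).const_mul (1/2)
  have iA : Integrable (fun p : ℝ×ℝ => gg β 1 p.1 * gg β 3 p.2 + gg β 3 p.1 * gg β 1 p.2) (μ.prod μ) := i13.add i31
  have iB : Integrable (fun p : ℝ×ℝ => (gg β 1 p.1 * gg β 3 p.2 + gg β 3 p.1 * gg β 1 p.2) - 2 * (gg β 2 p.1 * gg β 2 p.2)) (μ.prod μ) := iA.sub i22
  have iC : Integrable (fun p : ℝ×ℝ => ((gg β 1 p.1 * gg β 3 p.2 + gg β 3 p.1 * gg β 1 p.2) - 2 * (gg β 2 p.1 * gg β 2 p.2)) - gg β 1 p.1 * gg β 1 p.2) (μ.prod μ) := iB.sub i11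
  have iD : Integrable (fun p : ℝ×ℝ => (((gg β 1 p.1 * gg β 3 p.2 + gg β 3 p.1 * gg β 1 p.2) - 2 * (gg β 2 p.1 * gg β 2 p.2)) - gg β 1 p.1 * gg β 1 p.2) + (1/2 : ℝ) * (gg β 0 p.1 * gg β 2 p.2)) (μ.prod μ) := iC.add i02
  have hval : ∫ p, HH β p ∂(μ.prod μ)
      = 2 * In 1 β * In 3 β + In 0 β * In 2 β - 2 * (In 2 β)^2 - (In 1 β)^2 := by
    have hIn : ∀ n : ℕ, In n β = ∫ r, gg β n r ∂μ := fun n => rfl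
    calc ∫ p, HH β p ∂(μ.prod μ)
        = ∫ p, ((((gg β 1 p.1 * gg β 3 p.2 + gg β 3 p.1 * gg β 1 p.2)
            - 2 * (gg β 2 p.1 * gg β 2 p.2)) - gg β 1 p.1 * gg β 1 p.2)
            + (1/2 : ℝ) * (gg β 0 p.1 * gg β 2 p.2)) + (1/2 : ℝ) * (gg β 2 p.1 * gg β 0 p.2)
            ∂(μ.prod μ) := rfl
      _ = 2 * In 1 β * In 3 β + In 0 β * In 2 β - 2 * (In 2 β)^2 - (In 1 β)^2 := by
          rw [integral_add iD i20, integral_add iC i02, integral_sub iB i11,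
            integral_sub iA i22, integral_add i13 i31,
            integral_const_mul, integral_const_mul, integral_const_mul,
            integral_prod_mul, integral_prod_mul, integral_prod_mul, integral_prod_mul,
            integral_prod_mul, integral_prod_mul]
          simp only [← hIn]
          ring
  have hsup : (Ioo (0:ℝ) 1) ×ˢ (Ioo (2:ℝ) 3) ⊆ Function.support (HH β) := by
    rintro ⟨r, s⟩ ⟨hr, hs⟩
    simp only [Function.mem_support]
    have hlt : Real.cosh r < Real.cosh s := by
      rw [Real.cosh_lt_cosh]
      rw [abs_of_pos hr.1, abs_of_pos (by linarith [hs.1] : (0:ℝ) < s)]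
      linarith [hr.2, hs.1]
    have h1 := Real.one_le_cosh r
    have h2 := Real.one_le_cosh s
    have e1 := Real.exp_pos (-β * Real.cosh r)
    have e2 := Real.exp_pos (-β * Real.cosh s)
    rw [HH_eq]
    have hne : Real.cosh r - Real.cosh s ≠ 0 := by intro h; nlinarith
    positivity
  have hpos : 0 < ∫ p, HH β p ∂(μ.prod μ) := by
    rw [integral_pos_iff_support_of_nonneg_ae (Filter.Eventually.of_forall (HH_nonneg β)) HI]
    calc (0:ENNReal) < (μ.prod μ) ((Ioo (0:ℝ) 1) ×ˢ (Ioo (2:ℝ) 3)) := by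
          rw [Measure.prod_prod, hμ, Measure.restrict_apply measurableSet_Ioo,
            Measure.restrict_apply measurableSet_Ioo,
            inter_eq_self_of_subset_left Ioo_subset_Ioi_self,
            inter_eq_self_of_subset_left (Ioo_subset_Ioi_self.trans (Ioi_subset_Ioi (by norm_num))),
            Real.volume_Ioo, Real.volume_Ioo]
          norm_num
      _ ≤ (μ.prod μ) (Function.support (HH β)) := measure_mono hsup
  rw [← hval]; exact hpos

lemma main_deriv {β : ℝ} (hβ : 0 < β) :
    HasDerivAt (fun b => Kb 1 b / Kb 2 b)
      ((-(In 2 β) * Kb 2 β - Kb 1 β * (2 * -(In 3 β) - -(In 1 β))) / Kb 2 β ^ 2) β := by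
  have hK1 : HasDerivAt (Kb 1) (-(In 2 β)) β := by
    rw [Kb_one]; exact In_hasDeriv 1 hβ
  have h2' : HasDerivAt (fun b => 2 * In 2 b - In 0 b) (2 * -(In 3 β) - -(In 1 β)) β :=
    ((In_hasDeriv 2 hβ).const_mul 2).sub (In_hasDeriv 0 hβ)
  have ev : Kb 2 =ᶠ[nhds β] (fun b => 2 * In 2 b - In 0 b) := by
    filter_upwards [Ioi_mem_nhds hβ] with b hb
    exact Kb_two hb
  have hK2 : HasDerivAt (Kb 2) (2 * -(In 3 β) - -(In 1 β)) β :=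
    h2'.congr_of_eventuallyEq ev
  exact hK1.div hK2 (Kb_two_pos hβ).ne'

lemma deriv_value_pos {β : ℝ} (hβ : 0 < β) :
    0 < (-(In 2 β) * Kb 2 β - Kb 1 β * (2 * -(In 3 β) - -(In 1 β))) / Kb 2 β ^ 2 := by
  apply div_pos
  · have h1 : Kb 1 β = In 1 β := by rw [Kb_one]
    rw [h1, Kb_two hβ]
    have := key_pos hβ
    nlinarith
  · exact pow_pos (Kb_two_pos hβ) 2

end Aux

/-- `β ↦ K₁(β)/K₂(β)` is strictly increasing on `(0,∞)`;
that is, its derivative is positive for every `β > 0`. -/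
theorem K1_div_K2_strictMono :
    StrictMonoOn (fun β => Kb 1 β / Kb 2 β) (Set.Ioi (0 : ℝ)) ∧
      ∀ β : ℝ, 0 < β → 0 < deriv (fun β => Kb 1 β / Kb 2 β) β := by
  have hder : ∀ β : ℝ, 0 < β → 0 < deriv (fun β => Kb 1 β / Kb 2 β) β := by
    intro β hβ
    rw [(main_deriv hβ).deriv]
    exact deriv_value_pos hβ
  refine ⟨?_, hder⟩
  apply strictMonoOn_of_deriv_pos (convex_Ioi 0)
  · intro x hx
    exact ((main_deriv hx).differentiableAt.continuousAt).continuousWithinAt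
  · intro x hx
    rw [interior_Ioi] at hx
    exact hder x hx
end

section
/- For every β > 0 one has the lower bound K₀(β) + K₁(β) ≥ e^{−β} · √(2π/β) · (1 + 1/(8β) − 3/(32β²)). -/
open MeasureTheory Real
open scoped InnerProductSpace

open Set

lemma sqrt_quartic_bound (t : ℝ) : 1 + t^2/2 - t^4/8 ≤ Real.sqrt (1 + t^2) := by
  rcases le_or_gt (1 + t^2/2 - t^4/8) 0 with h | h
  · exact h.trans (Real.sqrt_nonneg _)
  · rw [show (1 + t^2/2 - t^4/8) = Real.sqrt ((1 + t^2/2 - t^4/8)^2) from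
      (Real.sqrt_sq h.le).symm]
    apply Real.sqrt_le_sqrt
    nlinarith [sq_nonneg t, sq_nonneg (t^2), sq_nonneg (t^3), sq_nonneg (t^2 - 2), h]

lemma integrable_exp_lin_quad {b : ℝ} (hb : 0 < b) (c : ℝ) :
    Integrable (fun r : ℝ => Real.exp (c*r - b*r^2)) := by
  have h : ∀ r : ℝ, c*r - b*r^2 = c^2/(4*b) + (-b * (r - c/(2*b))^2) := by
    intro r; field_simp; ring
  simp_rw [h, Real.exp_add]
  exact ((integrable_exp_neg_mul_sq hb).comp_sub_right (c/(2*b))).const_mul _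

lemma cosh_ge_one_add_sq (r : ℝ) (hr : 0 ≤ r) : 1 + r^2/2 ≤ Real.cosh r := by
  have h1 : Real.cosh r = 1 + 2 * Real.sinh (r/2)^2 := by
    have h := Real.cosh_two_mul (r/2)
    rw [show 2*(r/2) = r by ring] at h
    rw [h, Real.cosh_sq]; ring
  have h2 : r/2 ≤ Real.sinh (r/2) := by
    rcases eq_or_lt_of_le hr with h|h
    · simp [← h]
    · exact (Real.self_lt_sinh_iff.mpr (by linarith)).le
  nlinarith [h2, hr]

lemma cosh_eq_one_add_two_sq (r : ℝ) : Real.cosh r = 1 + 2 * Real.sinh (r/2)^2 := by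
  have h := Real.cosh_two_mul (r/2)
  rw [show 2*(r/2) = r by ring] at h
  rw [h, Real.cosh_sq]; ring

lemma integrableOn_cosh_exp {β : ℝ} (hβ : 0 < β) (c : ℝ) (hc0 : 0 ≤ c) (hc1 : c ≤ 1) :
    IntegrableOn (fun r => Real.cosh (c*r) * Real.exp (-β * Real.cosh r)) (Set.Ioi (0:ℝ)) := by
  have hg : IntegrableOn (fun r : ℝ => (2/β) * Real.exp (-(β/4) * r^2)) (Set.Ioi (0:ℝ)) :=
    ((integrable_exp_neg_mul_sq (by positivity : (0:ℝ) < β/4)).const_mul _).integrableOn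
  refine hg.mono' ?_ ?_
  · exact ((Real.continuous_cosh.comp (continuous_const.mul continuous_id)).mul
      (Real.continuous_exp.comp ((continuous_const.mul Real.continuous_cosh)))).aestronglyMeasurable
  · rw [ae_restrict_iff' measurableSet_Ioi]
    refine ae_of_all _ fun r hr => ?_
    have hr0 : (0:ℝ) < r := hr
    have hch : (0:ℝ) < Real.cosh r := Real.cosh_pos r
    have h1 : Real.cosh (c*r) ≤ Real.cosh r := by
      rw [Real.cosh_le_cosh]
      rw [abs_of_nonneg (by positivity), abs_of_nonneg hr0.le]
      nlinarith
    have h2 : 1 + r^2/2 ≤ Real.cosh r := cosh_ge_one_add_sq r hr0.le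
    have ha : Real.cosh r * Real.exp (-(β/2) * Real.cosh r) ≤ 2/β := by
      have h := Real.add_one_le_exp ((β/2) * Real.cosh r)
      have hb : Real.cosh r ≤ (2/β) * Real.exp ((β/2) * Real.cosh r) := by
        rw [div_mul_eq_mul_div, le_div_iff₀ hβ]
        nlinarith [Real.exp_pos ((β/2) * Real.cosh r)]
      calc Real.cosh r * Real.exp (-(β/2) * Real.cosh r)
          ≤ ((2/β) * Real.exp ((β/2) * Real.cosh r)) * Real.exp (-(β/2) * Real.cosh r) :=
            mul_le_mul_of_nonneg_right hb (Real.exp_pos _).le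
        _ = 2/β := by rw [mul_assoc, ← Real.exp_add]; ring_nf; rw [Real.exp_zero]; ring
    have hb2 : Real.exp (-(β/2) * Real.cosh r) ≤ Real.exp (-(β/4) * r^2) := by
      apply Real.exp_le_exp.mpr; nlinarith
    have hnorm : ‖Real.cosh (c*r) * Real.exp (-β * Real.cosh r)‖
        = Real.cosh (c*r) * Real.exp (-β * Real.cosh r) := by
      rw [Real.norm_eq_abs, abs_of_nonneg (by positivity)]
    rw [hnorm]
    calc Real.cosh (c*r) * Real.exp (-β * Real.cosh r)
        ≤ Real.cosh r * Real.exp (-β * Real.cosh r) :=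
          mul_le_mul_of_nonneg_right h1 (Real.exp_pos _).le
      _ = (Real.cosh r * Real.exp (-(β/2) * Real.cosh r)) * Real.exp (-(β/2) * Real.cosh r) := by
          rw [mul_assoc, ← Real.exp_add]; ring_nf
      _ ≤ (2/β) * Real.exp (-(β/2) * Real.cosh r) :=
          mul_le_mul_of_nonneg_right ha (Real.exp_pos _).le
      _ ≤ (2/β) * Real.exp (-(β/4) * r^2) :=
          mul_le_mul_of_nonneg_left hb2 (by positivity)

lemma rpow_two_eq (x : ℝ) : x ^ (2:ℝ) = x^2 := by
  rw [show (2:ℝ) = ((2:ℕ):ℝ) by norm_num, Real.rpow_natCast]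

lemma rpow_four_eq (x : ℝ) : x ^ (4:ℝ) = x^4 := by
  rw [show (4:ℝ) = ((4:ℕ):ℝ) by norm_num, Real.rpow_natCast]

lemma rpow_neg_half_nat {b : ℝ} (hb : 0 < b) (n : ℕ) :
    b ^ (-(n:ℝ)/2) = (Real.sqrt b ^ n)⁻¹ := by
  rw [show -(n:ℝ)/2 = (1/2) * (-(n:ℝ)) by ring, Real.rpow_mul hb.le, ← Real.sqrt_eq_rpow,
    Real.rpow_neg (Real.sqrt_nonneg b), Real.rpow_natCast]

lemma self_div_two_le_sinh (r : ℝ) (hr : 0 ≤ r) : r/2 ≤ Real.sinh (r/2) := by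
  rcases eq_or_lt_of_le hr with h|h
  · simp [← h]
  · exact (Real.self_lt_sinh_iff.mpr (by linarith)).le

set_option maxHeartbeats 1000000 in
/-- lower bound `K₀(β) + K₁(β) ≥ e^{−β} √(2π/β) (1 + 1/(8β) − 3/(32β²))`. -/
theorem bessel_K0_add_K1_lower_bound (β : ℝ) (hβ : 0 < β) :
    Real.exp (-β) * Real.sqrt (2 * Real.pi / β) *
      (1 + 1 / (8 * β) - 3 / (32 * β ^ 2)) ≤ Kb 0 β + Kb 1 β := by
  have h2β : (0:ℝ) < 2*β := by linarith
  -- the Gaussian-side function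
  set G : ℝ → ℝ := fun t => 4 * Real.exp (-β) * ((1 + t^2/2 - t^4/8) * Real.exp (-(2*β) * t^2))
    with hGdef
  -- integrability of G and its pieces
  have hI0 : Integrable (fun t : ℝ => Real.exp (-(2*β) * t^2)) := integrable_exp_neg_mul_sq h2β
  have hI2 : Integrable (fun t : ℝ => t^2 * Real.exp (-(2*β) * t^2)) := by
    have h := integrable_rpow_mul_exp_neg_mul_sq h2β (by norm_num : (-1:ℝ) < 2)
    simpa [rpow_two_eq] using h
  have hI4 : Integrable (fun t : ℝ => t^4 * Real.exp (-(2*β) * t^2)) := by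
    have h := integrable_rpow_mul_exp_neg_mul_sq h2β (by norm_num : (-1:ℝ) < 4)
    simpa [rpow_four_eq] using h
  have hGint : Integrable G := by
    have : G = fun t => (4*Real.exp (-β)) * (Real.exp (-(2*β)*t^2)
        + (1/2) * (t^2 * Real.exp (-(2*β)*t^2)) - (1/8) * (t^4 * Real.exp (-(2*β)*t^2))) := by
      funext t; simp only [hGdef]; ring
    rw [this]
    exact (((hI0.add (hI2.const_mul _)).sub (hI4.const_mul _)).const_mul _)
  have hGcont : Continuous G := by
    apply Continuous.mul continuous_const
    exact (Continuous.mul (by continuity) (Real.continuous_exp.comp (by continuity)))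
  -- the substitution maps
  set f : ℝ → ℝ := fun r => Real.sinh (r/2) with hfdef
  set f' : ℝ → ℝ := fun r => Real.cosh (r/2) * (1/2) with hf'def
  have hderiv : ∀ x : ℝ, HasDerivAt f (f' x) x := fun x => by
    have := (Real.hasDerivAt_sinh (x/2)).comp x ((hasDerivAt_id x).div_const 2); exact this
  -- integrability of (G ∘ f) * f' on Ici 0
  have hsub_int : IntegrableOn (fun x => (G ∘ f) x * f' x) (Set.Ici (0:ℝ)) := by
    have hD : IntegrableOn (fun r : ℝ => (8*Real.exp (-β)) * Real.exp (3*r - (β/2)*r^2))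
        (Set.Ici (0:ℝ)) :=
      ((integrable_exp_lin_quad (by positivity : (0:ℝ) < β/2) 3).const_mul _).integrableOn
    refine hD.mono' ?_ ?_
    · exact ((hGcont.comp (Real.continuous_sinh.comp (continuous_id.div_const 2))).mul
        ((Real.continuous_cosh.comp (continuous_id.div_const 2)).mul
          continuous_const)).aestronglyMeasurable
    · rw [ae_restrict_iff' measurableSet_Ici]
      refine ae_of_all _ fun r hr => ?_
      have hr0 : (0:ℝ) ≤ r := hr
      set t := Real.sinh (r/2) with htdef
      have ht0 : 0 ≤ t := by
        rw [htdef]; exact Real.sinh_nonneg_iff.mpr (by linarith)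
      have htc : t ≤ Real.cosh (r/2) := by
        have := Real.cosh_sub_sinh (r/2); nlinarith [Real.exp_pos (-(r/2))]
      have hce : Real.cosh (r/2) ≤ Real.exp (r/2) := by
        rw [Real.cosh_eq]
        have : Real.exp (-(r/2)) ≤ Real.exp (r/2) := Real.exp_le_exp.mpr (by linarith)
        linarith
      have hee : Real.exp (r/2) * Real.exp (r/2) = Real.exp r := by
        rw [← Real.exp_add]; ring_nf
      have ht2 : t^2 ≤ Real.exp r := by nlinarith
      have ht4 : t^4 ≤ Real.exp (2*r) := by
        have h2 : Real.exp r * Real.exp r = Real.exp (2*r) := by rw [← Real.exp_add]; ring_nf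
        nlinarith [sq_nonneg t, Real.exp_pos r]
      have hts : r/2 ≤ t := by
        rcases eq_or_lt_of_le hr0 with h|h
        · simp [htdef, ← h]
        · exact (Real.self_lt_sinh_iff.mpr (by linarith)).le
      have hexp2 : Real.exp (-(2*β) * t^2) ≤ Real.exp (-(β/2)*r^2) := by
        apply Real.exp_le_exp.mpr
        nlinarith [mul_le_mul hts hts (by linarith : (0:ℝ) ≤ r/2) ht0, hβ]
      have he1 : (1:ℝ) ≤ Real.exp r := Real.one_le_exp hr0
      have he2 : Real.exp r ≤ Real.exp (2*r) := Real.exp_le_exp.mpr (by linarith)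
      have hP : |1 + t^2/2 - t^4/8| ≤ 2 * Real.exp (2*r) := by
        rw [abs_le]; constructor <;> nlinarith [Real.exp_pos (2*r), sq_nonneg t]
      have hcr : Real.cosh (r/2) * (1/2) ≤ Real.exp r := by
        have : Real.exp (r/2) ≤ Real.exp r := Real.exp_le_exp.mpr (by linarith)
        linarith
      have hnn : 0 ≤ Real.cosh (r/2) * (1/2) := by positivity
      have key : ‖(G ∘ f) r * f' r‖ ≤ (8*Real.exp (-β)) * Real.exp (3*r - (β/2)*r^2) := by
        have hGf : (G ∘ f) r = 4 * Real.exp (-β) * ((1 + t^2/2 - t^4/8)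
            * Real.exp (-(2*β) * t^2)) := rfl
        rw [norm_mul, hGf]
        have h1 : ‖4 * Real.exp (-β) * ((1 + t^2/2 - t^4/8) * Real.exp (-(2*β) * t^2))‖
            ≤ 4 * Real.exp (-β) * (2 * Real.exp (2*r) * Real.exp (-(β/2)*r^2)) := by
          rw [Real.norm_eq_abs, abs_mul, abs_mul, abs_mul,
            abs_of_nonneg (Real.exp_pos (-β)).le,
            abs_of_nonneg (Real.exp_pos (-(2*β) * t^2)).le,
            show |(4:ℝ)| = 4 by norm_num]
          exact mul_le_mul_of_nonneg_left
            (mul_le_mul hP hexp2 (Real.exp_pos _).le (by positivity)) (by positivity)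
        have h2 : ‖f' r‖ ≤ Real.exp r := by
          rw [Real.norm_eq_abs, abs_of_nonneg hnn]; exact hcr
        calc ‖4 * Real.exp (-β) * ((1 + t^2/2 - t^4/8) * Real.exp (-(2*β) * t^2))‖ * ‖f' r‖
            ≤ (4 * Real.exp (-β) * (2 * Real.exp (2*r) * Real.exp (-(β/2)*r^2))) * Real.exp r := by
              apply mul_le_mul h1 h2 (norm_nonneg _) (by positivity)
          _ = (8*Real.exp (-β)) * (Real.exp (2*r) * Real.exp r * Real.exp (-(β/2)*r^2)) := by ring
          _ = (8*Real.exp (-β)) * Real.exp (3*r - (β/2)*r^2) := by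
              rw [← Real.exp_add, ← Real.exp_add]; ring_nf
      exact key
  -- substitution equality
  have hhalf : Filter.Tendsto (fun r : ℝ => r/2) Filter.atTop Filter.atTop :=
    Filter.Tendsto.atTop_div_const (by norm_num) Filter.tendsto_id
  have hft : Filter.Tendsto f Filter.atTop Filter.atTop := by
    refine Filter.tendsto_atTop_mono' Filter.atTop ?_ hhalf
    filter_upwards [Filter.eventually_ge_atTop (0:ℝ)] with r hr
    exact self_div_two_le_sinh r hr
  have hsub_eq : (∫ x in Ioi (0:ℝ), (G ∘ f) x * f' x) = ∫ u in Ioi (0:ℝ), G u := by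
    have h := MeasureTheory.integral_comp_mul_deriv_Ioi
      (f := f) (f' := f') (g := G) (a := 0)
      ((Real.continuous_sinh.comp (continuous_id.div_const 2)).continuousOn)
      hft (fun x _ => (hderiv x).hasDerivWithinAt)
      hGcont.continuousOn hGint.integrableOn hsub_int
    have hf0 : f 0 = 0 := by simp [hfdef]
    rwa [hf0] at h
  -- pointwise comparison on Ioi 0
  have hpt : ∀ r ∈ Ioi (0:ℝ), (G ∘ f) r * f' r
      ≤ (1 + Real.cosh r) * Real.exp (-β * Real.cosh r) := by
    intro r hr
    set t := Real.sinh (r/2) with htdef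
    have hcc : Real.cosh (r/2) = Real.sqrt (1 + t^2) := by
      rw [htdef, ← Real.cosh_sq', Real.sqrt_sq (Real.cosh_pos _).le]
    have hcoshr : Real.cosh r = 1 + 2*t^2 := cosh_eq_one_add_two_sq r
    have key : (1 + t^2/2 - t^4/8) * Real.sqrt (1+t^2) ≤ 1 + t^2 := by
      rcases le_or_gt (1+t^2/2-t^4/8) 0 with h|h
      · nlinarith [Real.sqrt_nonneg (1+t^2), sq_nonneg t]
      · have h1 := sqrt_quartic_bound t
        have h2 : Real.sqrt (1+t^2) * Real.sqrt (1+t^2) = 1+t^2 :=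
          Real.mul_self_sqrt (by positivity)
        nlinarith [Real.sqrt_nonneg (1+t^2)]
    have hGf : (G ∘ f) r = 4 * Real.exp (-β) * ((1 + t^2/2 - t^4/8)
        * Real.exp (-(2*β) * t^2)) := rfl
    have hexpsplit : Real.exp (-β * Real.cosh r) = Real.exp (-β) * Real.exp (-(2*β) * t^2) := by
      rw [hcoshr, ← Real.exp_add]; ring_nf
    calc (G ∘ f) r * f' r
        = (2 * Real.exp (-β) * Real.exp (-(2*β)*t^2))
            * ((1 + t^2/2 - t^4/8) * Real.sqrt (1+t^2)) := by
          rw [hGf]; show _ * (Real.cosh (r/2) * (1/2)) = _; rw [hcc]; ring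
      _ ≤ (2 * Real.exp (-β) * Real.exp (-(2*β)*t^2)) * (1 + t^2) :=
          mul_le_mul_of_nonneg_left key (by positivity)
      _ = (1 + Real.cosh r) * Real.exp (-β * Real.cosh r) := by
          rw [hexpsplit, hcoshr]; ring
  -- integrability of the hyperbolic integrand
  have hK0 : IntegrableOn (fun r => Real.exp (-β * Real.cosh r)) (Ioi (0:ℝ)) := by
    have h := integrableOn_cosh_exp hβ 0 le_rfl zero_le_one
    simpa using h
  have hK1 : IntegrableOn (fun r => Real.cosh r * Real.exp (-β * Real.cosh r)) (Ioi (0:ℝ)) := by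
    have h := integrableOn_cosh_exp hβ 1 zero_le_one le_rfl
    simpa using h
  have hRint : IntegrableOn (fun r => (1 + Real.cosh r) * Real.exp (-β * Real.cosh r))
      (Ioi (0:ℝ)) := by
    have hsum : IntegrableOn (fun r => Real.exp (-β * Real.cosh r)
        + Real.cosh r * Real.exp (-β * Real.cosh r)) (Ioi (0:ℝ)) := hK0.add hK1
    exact hsum.congr_fun (fun r _ => by ring) measurableSet_Ioi
  -- Kb sum as a single integral
  have hKb : Kb 0 β + Kb 1 β
      = ∫ r in Ioi (0:ℝ), (1 + Real.cosh r) * Real.exp (-β * Real.cosh r) := by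
    have e0 : Kb 0 β = ∫ r in Ioi (0:ℝ), Real.exp (-β * Real.cosh r) := by
      rw [Kb]; refine setIntegral_congr_fun measurableSet_Ioi fun r _ => by norm_num
    have e1 : Kb 1 β = ∫ r in Ioi (0:ℝ), Real.cosh r * Real.exp (-β * Real.cosh r) := by
      rw [Kb]; refine setIntegral_congr_fun measurableSet_Ioi fun r _ => by norm_num
    rw [e0, e1, ← integral_add hK0 hK1]
    refine setIntegral_congr_fun measurableSet_Ioi fun r _ => by ring
  -- the comparison of integrals
  have hmono : (∫ x in Ioi (0:ℝ), (G ∘ f) x * f' x)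
      ≤ ∫ r in Ioi (0:ℝ), (1 + Real.cosh r) * Real.exp (-β * Real.cosh r) :=
    setIntegral_mono_on (hsub_int.mono_set Ioi_subset_Ici_self) hRint measurableSet_Ioi hpt
  -- Gamma values
  have hG32 : Real.Gamma (3/2) = Real.sqrt π / 2 := by
    rw [show (3/2:ℝ) = 1/2 + 1 by norm_num, Real.Gamma_add_one (by norm_num),
      Real.Gamma_one_half_eq]; ring
  have hG52 : Real.Gamma (5/2) = 3 * Real.sqrt π / 4 := by
    rw [show (5/2:ℝ) = 3/2 + 1 by norm_num, Real.Gamma_add_one (by norm_num), hG32]; ring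
  -- moments
  have hm0 : ∫ t in Ioi (0:ℝ), Real.exp (-(2*β) * t^2) = Real.sqrt (π/(2*β)) / 2 :=
    integral_gaussian_Ioi (2*β)
  have hm2 : ∫ t in Ioi (0:ℝ), t^2 * Real.exp (-(2*β) * t^2)
      = (2*β) ^ (-(3:ℝ)/2) * (1/2) * Real.Gamma (3/2) := by
    have h := integral_rpow_mul_exp_neg_mul_rpow (p := 2) (q := 2) (b := 2*β)
      two_pos (by norm_num) h2β
    rw [show ∫ t in Ioi (0:ℝ), t^2 * Real.exp (-(2*β) * t^2)
        = ∫ x in Ioi (0:ℝ), x ^ (2:ℝ) * Real.exp (-(2*β) * x ^ (2:ℝ)) from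
      setIntegral_congr_fun measurableSet_Ioi fun x _ => by rw [rpow_two_eq], h]
    norm_num
  have hm4 : ∫ t in Ioi (0:ℝ), t^4 * Real.exp (-(2*β) * t^2)
      = (2*β) ^ (-(5:ℝ)/2) * (1/2) * Real.Gamma (5/2) := by
    have h := integral_rpow_mul_exp_neg_mul_rpow (p := 2) (q := 4) (b := 2*β)
      two_pos (by norm_num) h2β
    rw [show ∫ t in Ioi (0:ℝ), t^4 * Real.exp (-(2*β) * t^2)
        = ∫ x in Ioi (0:ℝ), x ^ (4:ℝ) * Real.exp (-(2*β) * x ^ (2:ℝ)) from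
      setIntegral_congr_fun measurableSet_Ioi fun x _ => by rw [rpow_four_eq, rpow_two_eq], h]
    norm_num
  -- value of ∫ G
  have hGval : ∫ t in Ioi (0:ℝ), G t
      = 4 * Real.exp (-β) * ((Real.sqrt (π/(2*β)) / 2)
          + (1/2) * ((2*β) ^ (-(3:ℝ)/2) * (1/2) * Real.Gamma (3/2))
          - (1/8) * ((2*β) ^ (-(5:ℝ)/2) * (1/2) * Real.Gamma (5/2))) := by
    have e1 : ∫ t in Ioi (0:ℝ), G t = 4*Real.exp (-β) * ∫ t in Ioi (0:ℝ),
        (Real.exp (-(2*β)*t^2) + ((1/2) * (t^2 * Real.exp (-(2*β)*t^2))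
          - (1/8) * (t^4 * Real.exp (-(2*β)*t^2)))) := by
      rw [← integral_const_mul]
      exact setIntegral_congr_fun measurableSet_Ioi fun t _ => by simp only [hGdef]; ring
    have hb2 : IntegrableOn (fun t : ℝ => (1/2) * (t^2 * Real.exp (-(2*β)*t^2)))
        (Ioi (0:ℝ)) := (hI2.const_mul (1/2)).integrableOn
    have hb4 : IntegrableOn (fun t : ℝ => (1/8) * (t^4 * Real.exp (-(2*β)*t^2)))
        (Ioi (0:ℝ)) := (hI4.const_mul (1/8)).integrableOn
    have hbs : IntegrableOn (fun t : ℝ => (1/2) * (t^2 * Real.exp (-(2*β)*t^2))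
        - (1/8) * (t^4 * Real.exp (-(2*β)*t^2))) (Ioi (0:ℝ)) := hb2.sub hb4
    rw [e1, integral_add hI0.integrableOn hbs, integral_sub hb2 hb4,
      integral_const_mul, integral_const_mul, hm0, hm2, hm4]
    ring
  -- final arithmetic
  set S := Real.sqrt (2*β) with hSdef
  have hS : 0 < S := Real.sqrt_pos.mpr h2β
  have hS2 : S^2 = 2*β := Real.sq_sqrt h2β.le
  have hsq1 : Real.sqrt (π/(2*β)) = Real.sqrt π / S := Real.sqrt_div pi_pos.le _
  have hsq2 : Real.sqrt (2*π/β) = 2 * Real.sqrt π / S := by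
    rw [show 2*π/β = (4*π)/(2*β) by field_simp; ring, Real.sqrt_div (by positivity),
      show (4:ℝ)*π = 2^2*π by norm_num, Real.sqrt_mul (by positivity),
      Real.sqrt_sq (by norm_num : (0:ℝ) ≤ 2)]
  have hr3 : (2*β) ^ (-(3:ℝ)/2) = (S^3)⁻¹ := by
    have := rpow_neg_half_nat h2β 3
    rwa [show ((3:ℕ):ℝ) = (3:ℝ) by norm_num] at this
  have hr5 : (2*β) ^ (-(5:ℝ)/2) = (S^5)⁻¹ := by
    have := rpow_neg_half_nat h2β 5
    rwa [show ((5:ℕ):ℝ) = (5:ℝ) by norm_num] at this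
  have hπ : 0 < Real.sqrt π := Real.sqrt_pos.mpr pi_pos
  have hE : 0 < Real.exp (-β) := Real.exp_pos _
  have hβS : β = S^2/2 := by nlinarith
  calc Real.exp (-β) * Real.sqrt (2*π/β) * (1 + 1/(8*β) - 3/(32*β^2))
      ≤ ∫ t in Ioi (0:ℝ), G t := by
        rw [hGval, hsq1, hsq2, hr3, hr5, hG32, hG52, hβS]
        rw [← sub_nonneg]
        have hexpand : 4 * Real.exp (-(S^2/2)) * ((Real.sqrt π / S / 2)
              + (1/2) * ((S^3)⁻¹ * (1/2) * (Real.sqrt π / 2))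
              - (1/8) * ((S^5)⁻¹ * (1/2) * (3 * Real.sqrt π / 4)))
            - Real.exp (-(S^2/2)) * (2 * Real.sqrt π / S)
              * (1 + 1/(8*(S^2/2)) - 3/(32*(S^2/2)^2))
            = Real.exp (-(S^2/2)) * Real.sqrt π * (9 / (16 * S^5)) := by
          field_simp
          ring
        rw [hexpand]
        positivity
    _ = ∫ x in Ioi (0:ℝ), (G ∘ f) x * f' x := hsub_eq.symm
    _ ≤ ∫ r in Ioi (0:ℝ), (1 + Real.cosh r) * Real.exp (-β * Real.cosh r) := hmono
    _ = Kb 0 β + Kb 1 β := hKb.symm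
end

section
/- For every β > 0 one has the upper bound K₀(β) ≤ e^{−β} · (√(2π)/(2√β)) · (1 − 1/(8β) + 9/(128β²)). -/
open MeasureTheory Real
open scoped InnerProductSpace

section AuxBessel
open MeasureTheory Real

-- pointwise bound
lemma inv_sqrt_bound {x : ℝ} (hx : 0 ≤ x) :
    1 / Real.sqrt (1 + x) ≤ 1 - x / 2 + 3 * x ^ 2 / 8 := by
  have h1 : (0:ℝ) < 1 + x := by linarith
  have hs : 0 < Real.sqrt (1 + x) := Real.sqrt_pos.mpr h1
  have hp : 0 < 1 - x / 2 + 3 * x ^ 2 / 8 := by nlinarith [sq_nonneg (x - 1)]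
  rw [div_le_iff₀ hs]
  have hsq : (1:ℝ) ≤ ((1 - x / 2 + 3 * x ^ 2 / 8) * Real.sqrt (1 + x)) ^ 2 := by
    rw [mul_pow, Real.sq_sqrt h1.le]
    nlinarith [sq_nonneg x, sq_nonneg (x - 1), pow_nonneg hx 3, pow_nonneg hx 5,
      sq_nonneg (x^2 - x)]
  nlinarith [mul_pos hp hs]

-- gaussian moments
lemma gauss0 : ∫ x in Set.Ioi (0:ℝ), Real.exp (-x ^ 2) = Real.sqrt π / 2 := by
  have := integral_gaussian_Ioi 1
  simpa using this

lemma gauss2 : ∫ x in Set.Ioi (0:ℝ), x ^ 2 * Real.exp (-x ^ 2) = Real.sqrt π / 4 := by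
  have h := integral_rpow_mul_exp_neg_rpow (p := 2) (q := 2) (by norm_num) (by norm_num)
  have he : ∀ x ∈ Set.Ioi (0:ℝ), x ^ (2:ℝ) * Real.exp (-x ^ (2:ℝ)) = x ^ 2 * Real.exp (-x ^ 2) := by
    intro x hx
    rw [← Real.rpow_natCast x 2]
    norm_num
  rw [setIntegral_congr_fun measurableSet_Ioi he] at h
  rw [h]
  have : ((2:ℝ) + 1) / 2 = 1/2 + 1 := by norm_num
  rw [this, Real.Gamma_add_one (by norm_num), Real.Gamma_one_half_eq]
  ring

lemma gauss4 : ∫ x in Set.Ioi (0:ℝ), x ^ 4 * Real.exp (-x ^ 2) = 3 * Real.sqrt π / 8 := by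
  have h := integral_rpow_mul_exp_neg_rpow (p := 2) (q := 4) (by norm_num) (by norm_num)
  have he : ∀ x ∈ Set.Ioi (0:ℝ), x ^ (4:ℝ) * Real.exp (-x ^ (2:ℝ)) = x ^ 4 * Real.exp (-x ^ 2) := by
    intro x hx
    rw [← Real.rpow_natCast x 4, ← Real.rpow_natCast x 2]
    norm_num
  rw [setIntegral_congr_fun measurableSet_Ioi he] at h
  rw [h]
  have : ((4:ℝ) + 1) / 2 = 3/2 + 1 := by norm_num
  rw [this, Real.Gamma_add_one (by norm_num)]
  have : (3:ℝ)/2 = 1/2 + 1 := by norm_num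
  rw [this, Real.Gamma_add_one (by norm_num), Real.Gamma_one_half_eq]
  ring


lemma Kb_subst (β : ℝ) (hβ : 0 < β) :
    (∫ r in Set.Ioi (0:ℝ), Real.exp (-β * Real.cosh r)) =
    ∫ u in Set.Ioi (0:ℝ), Real.exp (-β) * Real.exp (-u ^ 2) *
      (2 / (Real.sqrt (2 * β) * Real.sqrt (1 + u ^ 2 / (2 * β)))) := by
  set c := Real.sqrt (2 * β) with hc_def
  have hc : 0 < c := Real.sqrt_pos.mpr (by linarith)
  have hc2 : c ^ 2 = 2 * β := Real.sq_sqrt (by linarith)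
  set f : ℝ → ℝ := fun r => c * Real.sinh (r / 2) with hf_def
  set f' : ℝ → ℝ := fun r => c * (Real.cosh (r / 2) * (1 / 2)) with hf'_def
  set g : ℝ → ℝ := fun u => Real.exp (-β) * Real.exp (-u ^ 2) *
      (2 / (c * Real.sqrt (1 + u ^ 2 / (2 * β)))) with hg_def
  have hderiv : ∀ x ∈ Set.Ioi (0:ℝ), HasDerivWithinAt f (f' x) (Set.Ioi 0) x := by
    intro x hx
    have h1 : HasDerivAt (fun r : ℝ => Real.sinh (r / 2)) (Real.cosh (x / 2) * (1 / 2)) x := by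
      have := (Real.hasDerivAt_sinh (x / 2)).comp x ((hasDerivAt_id x).div_const 2)
      exact this
    exact ((h1.const_mul c).hasDerivWithinAt).congr_deriv (by ring)
  have hmono : StrictMono f := by
    intro a b hab
    exact mul_lt_mul_of_pos_left (Real.sinh_lt_sinh.mpr (by linarith)) hc
  have himg : f '' Set.Ioi 0 = Set.Ioi 0 := by
    ext u
    constructor
    · rintro ⟨r, hr, rfl⟩
      exact mul_pos hc (Real.sinh_pos_iff.mpr (by simpa using half_pos (Set.mem_Ioi.mp hr)))
    · intro hu
      refine ⟨2 * Real.arsinh (u / c), ?_, ?_⟩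
      · have h0 : 0 < Real.arsinh (u / c) := Real.arsinh_pos_iff.mpr (div_pos hu hc)
        exact Set.mem_Ioi.mpr (by linarith)
      · simp only [hf_def]
        rw [mul_div_cancel_left₀ _ (two_ne_zero), Real.sinh_arsinh,
          mul_div_cancel₀ _ (ne_of_gt hc)]
  have key := integral_image_eq_integral_abs_deriv_smul measurableSet_Ioi hderiv
    hmono.injective.injOn g
  rw [himg] at key
  rw [show (∫ u in Set.Ioi (0:ℝ), Real.exp (-β) * Real.exp (-u ^ 2) *
      (2 / (c * Real.sqrt (1 + u ^ 2 / (2 * β))))) = ∫ u in Set.Ioi (0:ℝ), g u from rfl, key]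
  refine setIntegral_congr_fun measurableSet_Ioi (fun x hx => ?_)
  have hch : 0 < Real.cosh (x / 2) := Real.cosh_pos _
  have hfx2 : (f x) ^ 2 = β * (Real.cosh x - 1) := by
    have hx2 : Real.cosh x = 2 * Real.cosh (x/2) ^ 2 - 1 := by
      have := Real.cosh_two_mul (x / 2)
      rw [show 2 * (x/2) = x by ring] at this
      rw [this, Real.cosh_sq]
      ring
    simp only [hf_def, mul_pow, hc2]
    nlinarith [Real.cosh_sq (x/2)]
  have hsq : Real.sqrt (1 + (f x) ^ 2 / (2 * β)) = Real.cosh (x / 2) := by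
    have : 1 + (f x) ^ 2 / (2 * β) = Real.cosh (x / 2) ^ 2 := by
      rw [hfx2]
      have h2β : (2 * β) ≠ 0 := by positivity
      field_simp
      nlinarith [Real.cosh_sq (x/2), Real.cosh_two_mul (x/2),
        (show Real.cosh (2*(x/2)) = Real.cosh x by rw [show 2*(x/2)=x by ring])]
    rw [this, Real.sqrt_sq hch.le]
  have habs : |f' x| = c * (Real.cosh (x / 2) * (1 / 2)) := by
    simp only [hf'_def]
    exact abs_of_pos (by positivity)
  rw [smul_eq_mul, habs]
  simp only [hg_def, hsq]
  rw [← Real.exp_add]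
  have : -β + -(f x) ^ 2 = -β * Real.cosh x := by rw [hfx2]; ring
  rw [this]
  field_simp


end AuxBessel

/-- upper bound `K₀(β) ≤ e^{−β} (√(2π)/(2√β)) (1 − 1/(8β) + 9/(128β²))`. -/
theorem bessel_K0_upper_bound (β : ℝ) (hβ : 0 < β) :
    Kb 0 β ≤ Real.exp (-β) * (Real.sqrt (2 * Real.pi) / (2 * Real.sqrt β)) *
      (1 - 1 / (8 * β) + 9 / (128 * β ^ 2)) := by
  have hKb : Kb 0 β = ∫ r in Set.Ioi (0:ℝ), Real.exp (-β * Real.cosh r) := by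
    unfold Kb
    refine setIntegral_congr_fun measurableSet_Ioi (fun x hx => ?_)
    simp
  rw [hKb, Kb_subst β hβ]
  set c := Real.sqrt (2 * β) with hc_def
  have hc : 0 < c := Real.sqrt_pos.mpr (by linarith)
  have hc2 : c ^ 2 = 2 * β := Real.sq_sqrt (by linarith)
  -- integrability facts
  have hE0 : IntegrableOn (fun x : ℝ => Real.exp (-x ^ 2)) (Set.Ioi 0) := by
    have := (integrable_exp_neg_mul_sq (one_pos)).integrableOn (s := Set.Ioi (0:ℝ))
    simpa using this
  have hE2 : IntegrableOn (fun x : ℝ => x ^ 2 * Real.exp (-x ^ 2)) (Set.Ioi 0) := by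
    have h := integrableOn_rpow_mul_exp_neg_mul_sq (b := 1) one_pos (s := 2) (by norm_num)
    refine h.congr_fun (fun x hx => ?_) measurableSet_Ioi
    rw [← Real.rpow_natCast x 2]; norm_num
  have hE4 : IntegrableOn (fun x : ℝ => x ^ 4 * Real.exp (-x ^ 2)) (Set.Ioi 0) := by
    have h := integrableOn_rpow_mul_exp_neg_mul_sq (b := 1) one_pos (s := 4) (by norm_num)
    refine h.congr_fun (fun x hx => ?_) measurableSet_Ioi
    rw [← Real.rpow_natCast x 4]; norm_num
  set h : ℝ → ℝ := fun u => Real.exp (-β) * (2 / c) *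
      (Real.exp (-u ^ 2) - (1 / (4 * β)) * (u ^ 2 * Real.exp (-u ^ 2))
        + (3 / (32 * β ^ 2)) * (u ^ 4 * Real.exp (-u ^ 2))) with hh_def
  have hInth : IntegrableOn h (Set.Ioi 0) := by
    exact (((hE0.sub (hE2.const_mul _)).add (hE4.const_mul _)).const_mul _)
  have hle : (∫ u in Set.Ioi (0:ℝ), Real.exp (-β) * Real.exp (-u ^ 2) *
      (2 / (c * Real.sqrt (1 + u ^ 2 / (2 * β))))) ≤ ∫ u in Set.Ioi (0:ℝ), h u := by
    refine integral_mono_of_nonneg (ae_of_all _ (fun u => by positivity)) hInth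
      (ae_of_all _ (fun u => ?_))
    simp only [hh_def]
    have hx : (0:ℝ) ≤ u ^ 2 / (2 * β) := by positivity
    have hb := inv_sqrt_bound hx
    have h1 : (0:ℝ) < 1 + u ^ 2 / (2 * β) := by positivity
    have hs : 0 < Real.sqrt (1 + u ^ 2 / (2 * β)) := Real.sqrt_pos.mpr h1
    have key : 2 / (c * Real.sqrt (1 + u ^ 2 / (2 * β))) ≤
        (2 / c) * (1 - u ^ 2 / (4 * β) + 3 * u ^ 4 / (32 * β ^ 2)) := by
      have e1 : 2 / (c * Real.sqrt (1 + u ^ 2 / (2 * β))) =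
          (2 / c) * (1 / Real.sqrt (1 + u ^ 2 / (2 * β))) := by
        field_simp
      have e2 : 1 - u ^ 2 / (2 * β) / 2 + 3 * (u ^ 2 / (2 * β)) ^ 2 / 8 =
          1 - u ^ 2 / (4 * β) + 3 * u ^ 4 / (32 * β ^ 2) := by
        field_simp; ring
      rw [e1]
      calc (2 / c) * (1 / Real.sqrt (1 + u ^ 2 / (2 * β)))
          ≤ (2 / c) * (1 - u ^ 2 / (2 * β) / 2 + 3 * (u ^ 2 / (2 * β)) ^ 2 / 8) := by
            exact mul_le_mul_of_nonneg_left hb (by positivity)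
        _ = _ := by rw [e2]
    calc Real.exp (-β) * Real.exp (-u ^ 2) * (2 / (c * Real.sqrt (1 + u ^ 2 / (2 * β))))
        ≤ Real.exp (-β) * Real.exp (-u ^ 2) *
            ((2 / c) * (1 - u ^ 2 / (4 * β) + 3 * u ^ 4 / (32 * β ^ 2))) := by
          exact mul_le_mul_of_nonneg_left key (by positivity)
      _ = Real.exp (-β) * (2 / c) *
            (Real.exp (-u ^ 2) - (1 / (4 * β)) * (u ^ 2 * Real.exp (-u ^ 2))
              + (3 / (32 * β ^ 2)) * (u ^ 4 * Real.exp (-u ^ 2))) := by ring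
  refine hle.trans ?_
  have hval : (∫ u in Set.Ioi (0:ℝ), h u) = Real.exp (-β) * (2 / c) *
      (Real.sqrt π / 2 - (1 / (4 * β)) * (Real.sqrt π / 4)
        + (3 / (32 * β ^ 2)) * (3 * Real.sqrt π / 8)) := by
    have hA : IntegrableOn (fun x : ℝ => Real.exp (-x ^ 2)
        - (1 / (4 * β)) * (x ^ 2 * Real.exp (-x ^ 2))) (Set.Ioi 0) := hE0.sub (hE2.const_mul _)
    have hB : IntegrableOn (fun x : ℝ => (3 / (32 * β ^ 2)) * (x ^ 4 * Real.exp (-x ^ 2)))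
        (Set.Ioi 0) := hE4.const_mul _
    have hC : IntegrableOn (fun x : ℝ => (1 / (4 * β)) * (x ^ 2 * Real.exp (-x ^ 2)))
        (Set.Ioi 0) := hE2.const_mul _
    simp only [hh_def]
    rw [integral_const_mul, integral_add hA hB, integral_sub hE0 hC,
      integral_const_mul, integral_const_mul, gauss0, gauss2, gauss4]
  rw [hval]
  -- final algebra: equality
  have h2 : Real.sqrt (2 * π) = Real.sqrt 2 * Real.sqrt π := Real.sqrt_mul (by norm_num) _
  have h3 : c = Real.sqrt 2 * Real.sqrt β := by rw [hc_def, Real.sqrt_mul (by norm_num)]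
  have hsβ : 0 < Real.sqrt β := Real.sqrt_pos.mpr hβ
  have hs2 : (0:ℝ) < Real.sqrt 2 := by positivity
  have hs2sq : Real.sqrt 2 ^ 2 = 2 := Real.sq_sqrt (by norm_num)
  have hsβsq : Real.sqrt β ^ 2 = β := Real.sq_sqrt hβ.le
  apply le_of_eq
  rw [h2, h3]
  have key : (2:ℝ) / (Real.sqrt 2 * Real.sqrt β) = Real.sqrt 2 / Real.sqrt β := by
    rw [show (2:ℝ) = Real.sqrt 2 * Real.sqrt 2 by nlinarith [hs2sq]]
    field_simp
    rw [Real.sqrt_sq hs2.le]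
  rw [key]
  field_simp
  ring
end

section
/- For every β ≥ 2 one has K₁(β)/K₀(β) ≥ (128β² + 48β − 33)/(128β² − 16β + 9). -/
open MeasureTheory Real
open scoped InnerProductSpace

open Set Filter

-- cube times exp decay bound
lemma aux_cube_exp {x : ℝ} (hx : 1 ≤ x) : x ^ 3 * Real.exp (-x) ≤ 24 := by
  have h0 : (0:ℝ) ≤ x := by linarith
  have h := Real.sum_le_exp_of_nonneg h0 5
  simp [Finset.sum_range_succ, Nat.factorial] at h
  have h4 : x ^ 4 / 24 ≤ Real.exp x := by
    have : (0:ℝ) ≤ x^2/2 := by positivity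
    have : (0:ℝ) ≤ x^3/6 := by positivity
    nlinarith
  rw [Real.exp_neg]
  rw [mul_inv_le_iff₀' (Real.exp_pos x)]
  nlinarith [pow_le_pow_right₀ hx (by norm_num : (3:ℕ) ≤ 4)]

-- cosh lower bound
lemma aux_cosh_lb (r : ℝ) : (r + 1) / 2 ≤ Real.cosh r := by
  rw [Real.cosh_eq]
  have h1 := Real.add_one_le_exp r
  have h2 := (Real.exp_pos (-r)).le
  linarith

-- master integrability lemma
lemma integ_poly {β : ℝ} (hβ : 2 ≤ β) (p : ℝ → ℝ) (hp : Continuous p) (M : ℝ)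
    (hb : ∀ x : ℝ, 1 ≤ x → |p x| ≤ M * x ^ 3) :
    IntegrableOn (fun r => p (Real.cosh r) * Real.exp (-β * Real.cosh r)) (Set.Ioi 0) := by
  have hM : 0 ≤ M := by have := hb 1 le_rfl; have := abs_nonneg (p 1); nlinarith
  have hint : IntegrableOn (fun r => (24 * M * Real.exp (-(1/2))) * Real.exp (-(1/2) * r))
      (Set.Ioi (0:ℝ)) :=
    (exp_neg_integrableOn_Ioi 0 (by norm_num : (0:ℝ) < 1/2)).const_mul _
  apply Integrable.mono' hint
  · exact ((hp.comp Real.continuous_cosh).mul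
      ((continuous_const.mul Real.continuous_cosh).rexp)).aestronglyMeasurable
  · refine (ae_restrict_iff' measurableSet_Ioi).2 (Filter.Eventually.of_forall fun r hr => ?_)
    have hr0 : (0:ℝ) ≤ r := (le_of_lt hr)
    set x := Real.cosh r with hxdef
    have hx : 1 ≤ x := Real.one_le_cosh r
    have hx0 : (0:ℝ) ≤ x := by linarith
    have h1 : Real.exp (-β * x) ≤ Real.exp (-x) * Real.exp (-x) := by
      rw [← Real.exp_add]
      apply Real.exp_le_exp.2
      nlinarith
    have h2 : x ^ 3 * Real.exp (-x) ≤ 24 := aux_cube_exp hx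
    have h3 : Real.exp (-x) ≤ Real.exp (-(1/2)) * Real.exp (-(1/2) * r) := by
      rw [← Real.exp_add]
      apply Real.exp_le_exp.2
      have := aux_cosh_lb r
      rw [hxdef] at *
      linarith
    have hnorm : ‖p x * Real.exp (-β * x)‖ ≤ M * x ^ 3 * Real.exp (-β * x) := by
      rw [norm_mul, Real.norm_eq_abs, Real.norm_eq_abs, abs_of_pos (Real.exp_pos _)]
      exact mul_le_mul_of_nonneg_right (hb x hx) (Real.exp_pos _).le
    refine hnorm.trans ?_
    calc M * x ^ 3 * Real.exp (-β * x) ≤ M * x ^ 3 * (Real.exp (-x) * Real.exp (-x)) := by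
          apply mul_le_mul_of_nonneg_left h1; positivity
      _ = M * (x ^ 3 * Real.exp (-x)) * Real.exp (-x) := by ring
      _ ≤ M * 24 * Real.exp (-x) := by
          apply mul_le_mul_of_nonneg_right _ (Real.exp_pos _).le
          exact mul_le_mul_of_nonneg_left h2 hM
      _ ≤ M * 24 * (Real.exp (-(1/2)) * Real.exp (-(1/2) * r)) := by
          apply mul_le_mul_of_nonneg_left h3; positivity
      _ = 24 * M * Real.exp (-(1/2)) * Real.exp (-(1/2) * r) := by ring


/-- for every `β ≥ 2`, `K₁(β)/K₀(β) ≥ (128β² + 48β − 33)/(128β² − 16β + 9)`. -/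
theorem bessel_K1_div_K0_lower_bound (β : ℝ) (hβ : 2 ≤ β) :
    (128 * β ^ 2 + 48 * β - 33) / (128 * β ^ 2 - 16 * β + 9) ≤ Kb 1 β / Kb 0 β := by
  have hβ0 : (0:ℝ) < β := by linarith
  set P : ℝ := 16 * β ^ 2 + 12 * β + 5 with hP
  set C : ℝ := 16 * β ^ 2 + 20 * β + 9 with hC
  set A : ℝ := -(12 * β + 4) with hA
  set B : ℝ := 4 * β with hB
  set e : ℝ → ℝ := fun r => Real.exp (-β * Real.cosh r) with he
  have hI0 : IntegrableOn e (Set.Ioi 0) := by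
    have h := integ_poly hβ (fun _ => (1:ℝ)) continuous_const 1
      (fun x hx => by
        rw [abs_one]
        nlinarith [pow_le_pow_left₀ (by norm_num : (0:ℝ) ≤ 1) hx 3])
    simpa only [one_mul] using h
  have hI1 : IntegrableOn (fun r => Real.cosh r * e r) (Set.Ioi 0) := by
    exact integ_poly hβ (fun x => x) continuous_id 1
      (fun x hx => by
        rw [abs_of_nonneg (by linarith)]
        nlinarith [pow_le_pow_left₀ (by norm_num : (0:ℝ) ≤ 1) hx 3, sq_nonneg x])
  have hIQ : IntegrableOn
      (fun r => (2 * β * Real.cosh r - (2 * β + 3)) ^ 2 * (Real.cosh r - 1) * e r)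
      (Set.Ioi 0) := by
    exact integ_poly hβ (fun x => (2 * β * x - (2 * β + 3)) ^ 2 * (x - 1)) (by continuity)
      ((4 * β + 3) ^ 2)
      (fun x hx => by
        have hy : (2 * β * x - (2 * β + 3)) ^ 2 ≤ ((4 * β + 3) * x) ^ 2 := by
          apply sq_le_sq' <;> nlinarith
        rw [abs_of_nonneg (by nlinarith [sq_nonneg (2 * β * x - (2 * β + 3))])]
        nlinarith [hy, sq_nonneg (2 * β * x - (2 * β + 3)), hx])
  set F : ℝ → ℝ := fun r => Real.sinh r * (A + B * Real.cosh r) * e r with hF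
  set F' : ℝ → ℝ := fun r => P * (Real.cosh r * e r) - C * e r
      - (2 * β * Real.cosh r - (2 * β + 3)) ^ 2 * (Real.cosh r - 1) * e r with hF'
  have hderiv : ∀ r : ℝ, HasDerivAt F (F' r) r := by
    intro r
    have hc := Real.hasDerivAt_cosh r
    have h1 : HasDerivAt (fun y : ℝ => A + B * Real.cosh y) (B * Real.sinh r) r :=
      ((hc.const_mul B).const_add A)
    have h2 : HasDerivAt (fun y : ℝ => Real.exp (-β * Real.cosh y))
        (Real.exp (-β * Real.cosh r) * (-β * Real.sinh r)) r :=
      (hc.const_mul (-β)).exp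
    have h3 : HasDerivAt (fun y => Real.sinh y * (A + B * Real.cosh y) * Real.exp (-β * Real.cosh y))
        ((Real.cosh r * (A + B * Real.cosh r) + Real.sinh r * (B * Real.sinh r)) * Real.exp (-β * Real.cosh r)
          + Real.sinh r * (A + B * Real.cosh r) * (Real.exp (-β * Real.cosh r) * (-β * Real.sinh r))) r :=
      ((Real.hasDerivAt_sinh r).mul h1).mul h2
    convert h3 using 1
    simp only [hF', hA, hB, hP, hC, he]
    ring_nf
    rw [Real.sinh_sq]
    ring
  have htendsF : Filter.Tendsto F Filter.atTop (nhds 0) := by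
    have h1 : Filter.Tendsto (fun r : ℝ => (1/2) * r) Filter.atTop Filter.atTop :=
      Filter.tendsto_id.const_mul_atTop (by norm_num)
    have h2 : Filter.Tendsto (fun r : ℝ => Real.exp (-((1/2) * r))) Filter.atTop (nhds 0) :=
      Real.tendsto_exp_neg_atTop_nhds_zero.comp h1
    have hg : Filter.Tendsto (fun r : ℝ => ((16 * β + 4) * 24 * Real.exp (-(1/2)))
        * Real.exp (-((1/2) * r))) Filter.atTop (nhds 0) := by
      have h3 := h2.const_mul ((16 * β + 4) * 24 * Real.exp (-(1/2)))
      simpa using h3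
    apply squeeze_zero_norm' _ hg
    filter_upwards [Filter.eventually_ge_atTop (0:ℝ)] with r hr0
    have hx : 1 ≤ Real.cosh r := Real.one_le_cosh r
    have hx0 : (0:ℝ) ≤ Real.cosh r := by linarith
    have hsinh : |Real.sinh r| ≤ Real.cosh r := by
      rw [Real.sinh_eq, Real.cosh_eq, abs_div, abs_of_nonneg (by
        nlinarith [Real.exp_le_exp.2 (neg_le_self hr0), Real.exp_pos r, Real.exp_pos (-r)])]
      have := Real.exp_pos (-r)
      rw [abs_two]
      nlinarith
    have hAB : |A + B * Real.cosh r| ≤ (16 * β + 4) * Real.cosh r := by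
      rw [hA, hB]
      rw [abs_le]
      constructor <;> nlinarith
    have key : ‖F r‖ ≤ (16 * β + 4) * (Real.cosh r ^ 2 * e r) := by
      rw [hF]
      simp only [norm_mul, Real.norm_eq_abs]
      rw [abs_of_pos (Real.exp_pos _)]
      calc |Real.sinh r| * |A + B * Real.cosh r| * e r
          ≤ Real.cosh r * ((16 * β + 4) * Real.cosh r) * e r := by
            apply mul_le_mul_of_nonneg_right _ (Real.exp_pos _).le
            exact mul_le_mul hsinh hAB (abs_nonneg _) hx0
        _ = (16 * β + 4) * (Real.cosh r ^ 2 * e r) := by ring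
    refine key.trans ?_
    -- cosh^2 * e ≤ 24 * exp(-1/2) * exp(-r/2)
    have h4 : Real.cosh r ^ 2 * e r ≤ 24 * Real.exp (-((1/2) * r)) * Real.exp (-(1/2)) := by
      have hb1 : Real.exp (-β * Real.cosh r) ≤ Real.exp (-Real.cosh r) * Real.exp (-Real.cosh r) := by
        rw [← Real.exp_add]; apply Real.exp_le_exp.2; nlinarith
      have hb2 : Real.cosh r ^ 3 * Real.exp (-Real.cosh r) ≤ 24 := aux_cube_exp hx
      have hb3 : Real.exp (-Real.cosh r) ≤ Real.exp (-(1/2)) * Real.exp (-((1/2) * r)) := by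
        rw [← Real.exp_add]; apply Real.exp_le_exp.2
        have := aux_cosh_lb r; linarith
      have hb4 : Real.cosh r ^ 2 ≤ Real.cosh r ^ 3 :=
        pow_le_pow_right₀ hx (by norm_num)
      have hb5 : Real.cosh r ^ 2 * e r ≤ Real.cosh r ^ 3 * (Real.exp (-Real.cosh r) * Real.exp (-Real.cosh r)) := by
        rw [he]
        have := (Real.exp_pos (-β * Real.cosh r)).le
        calc Real.cosh r ^ 2 * Real.exp (-β * Real.cosh r)
            ≤ Real.cosh r ^ 3 * Real.exp (-β * Real.cosh r) :=
              mul_le_mul_of_nonneg_right hb4 this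
          _ ≤ Real.cosh r ^ 3 * (Real.exp (-Real.cosh r) * Real.exp (-Real.cosh r)) :=
              mul_le_mul_of_nonneg_left hb1 (by positivity)
      calc Real.cosh r ^ 2 * e r
          ≤ Real.cosh r ^ 3 * (Real.exp (-Real.cosh r) * Real.exp (-Real.cosh r)) := hb5
        _ = (Real.cosh r ^ 3 * Real.exp (-Real.cosh r)) * Real.exp (-Real.cosh r) := by ring
        _ ≤ 24 * Real.exp (-Real.cosh r) :=
            mul_le_mul_of_nonneg_right hb2 (Real.exp_pos _).le
        _ ≤ 24 * (Real.exp (-(1/2)) * Real.exp (-((1/2) * r))) := by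
            apply mul_le_mul_of_nonneg_left hb3 (by norm_num)
        _ = 24 * Real.exp (-((1/2) * r)) * Real.exp (-(1/2)) := by ring
    calc (16 * β + 4) * (Real.cosh r ^ 2 * e r)
        ≤ (16 * β + 4) * (24 * Real.exp (-((1/2) * r)) * Real.exp (-(1/2))) :=
          mul_le_mul_of_nonneg_left h4 (by linarith)
      _ = (16 * β + 4) * 24 * Real.exp (-(1/2)) * Real.exp (-((1/2) * r)) := by ring
  -- integrability of F'
  have hF'int : IntegrableOn F' (Set.Ioi 0) := by
    rw [hF']
    exact ((hI1.const_mul P).sub (hI0.const_mul C)).sub hIQ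
  -- FTC
  have hFTC : ∫ r in Set.Ioi (0:ℝ), F' r = 0 - F 0 :=
    integral_Ioi_of_hasDerivAt_of_tendsto' (fun r _ => hderiv r) hF'int htendsF
  have hF0 : F 0 = 0 := by simp [hF]
  have hsplit : ∫ r in Set.Ioi (0:ℝ), F' r
      = P * (∫ r in Set.Ioi (0:ℝ), Real.cosh r * e r) - C * (∫ r in Set.Ioi (0:ℝ), e r)
        - ∫ r in Set.Ioi (0:ℝ), (2 * β * Real.cosh r - (2 * β + 3)) ^ 2 * (Real.cosh r - 1) * e r := by
    have hf : IntegrableOn (fun r => P * (Real.cosh r * e r) - C * e r) (Set.Ioi 0) :=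
      (hI1.const_mul P).sub (hI0.const_mul C)
    rw [hF']
    rw [integral_sub hf hIQ, integral_sub (hI1.const_mul P) (hI0.const_mul C),
        integral_const_mul, integral_const_mul]
  have hQnonneg : 0 ≤ ∫ r in Set.Ioi (0:ℝ),
      (2 * β * Real.cosh r - (2 * β + 3)) ^ 2 * (Real.cosh r - 1) * e r := by
    apply setIntegral_nonneg measurableSet_Ioi
    intro r _
    have hx : 1 ≤ Real.cosh r := Real.one_le_cosh r
    have := (Real.exp_pos (-β * Real.cosh r)).le
    apply mul_nonneg (mul_nonneg (sq_nonneg _) (by linarith))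
    exact this
  -- identify Kb values
  have hK0 : Kb 0 β = ∫ r in Set.Ioi (0:ℝ), e r := by
    unfold Kb
    simp only [Nat.cast_zero, zero_mul, Real.cosh_zero, one_mul, he]
  have hK1 : Kb 1 β = ∫ r in Set.Ioi (0:ℝ), Real.cosh r * e r := by
    unfold Kb
    simp only [Nat.cast_one, one_mul, he]
  have hK0pos : 0 < Kb 0 β := by
    rw [hK0]
    have hsupp : Function.support e = Set.univ := by
      ext r; simp [he, Real.exp_ne_zero]
    rw [setIntegral_pos_iff_support_of_nonneg_ae _ hI0]
    · rw [hsupp]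
      simp [Real.volume_Ioi]
    · exact Filter.Eventually.of_forall fun r => (Real.exp_pos _).le
  have hmain : C * Kb 0 β ≤ P * Kb 1 β := by
    rw [hK0, hK1]
    have := hFTC
    rw [hsplit, hF0] at this
    linarith
  have hPpos : (0:ℝ) < P := by rw [hP]; nlinarith
  have hDpos : (0:ℝ) < 128 * β ^ 2 - 16 * β + 9 := by nlinarith
  have step1 : (128 * β ^ 2 + 48 * β - 33) / (128 * β ^ 2 - 16 * β + 9) ≤ C / P := by
    rw [div_le_div_iff₀ hDpos hPpos, hC, hP]
    nlinarith [sq_nonneg β]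
  have step2 : C / P ≤ Kb 1 β / Kb 0 β := by
    rw [div_le_div_iff₀ hPpos hK0pos]
    nlinarith
  linarith
end

section
/- For every β with 0 < β < 2 one has (K₁/K₂)'(β) ≥ (2 − β)/(β + 2)² > 0, where (K₁/K₂)' denotes the derivative of the function β ↦ K₁(β)/K₂(β). -/
open MeasureTheory Real
open scoped InnerProductSpace

open Filter Set Asymptotics

lemma tendsto_aux (c β : ℝ) (hβ : 0 < β) :
    Tendsto (fun r => Real.exp (c * r) * Real.exp (-β * Real.cosh r)) atTop (nhds 0) := by
  have h1 : Tendsto (fun r : ℝ => β / 2 * Real.exp r - c * r) atTop atTop := by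
    have hx : Tendsto (fun x : ℝ => x * Real.exp (-x)) atTop (nhds 0) := by
      simpa using Real.tendsto_pow_mul_exp_neg_atTop_nhds_zero 1
    have h2 : Tendsto (fun r : ℝ => Real.exp r * (β / 2 - c * (r * Real.exp (-r)))) atTop atTop := by
      refine Filter.Tendsto.atTop_mul_pos (half_pos hβ) Real.tendsto_exp_atTop ?_
      have := (tendsto_const_nhds (x := β / 2)).sub (hx.const_mul c)
      simpa using this
    refine h2.congr' (Filter.Eventually.of_forall fun r => ?_)
    have he : Real.exp r * Real.exp (-r) = 1 := by rw [← Real.exp_add]; simp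
    simp only [mul_sub]
    linear_combination (-(c * r)) * he
  have h3 : Tendsto (fun r : ℝ => c * r - β * Real.cosh r) atTop atBot := by
    refine tendsto_atBot_mono (fun r => ?_) (tendsto_neg_atTop_atBot.comp h1)
    have : Real.exp r / 2 ≤ Real.cosh r := by
      rw [Real.cosh_eq]; nlinarith [Real.exp_pos (-r)]
    simp only [Function.comp]
    nlinarith
  have := Real.tendsto_exp_atBot.comp h3
  refine this.congr fun r => ?_
  simp only [Function.comp]
  rw [← Real.exp_add]
  ring_nf

lemma integrableOn_bound {β c C : ℝ} (hβ : 0 < β) {f : ℝ → ℝ} (hf : Continuous f)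
    (hb : ∀ r, 0 ≤ r → |f r| ≤ C * (Real.exp (c * r) * Real.exp (-β * Real.cosh r))) :
    IntegrableOn f (Set.Ioi 0) := by
  refine integrable_of_isBigO_exp_neg one_pos hf.continuousOn ?_
  have hlo : (fun r => C * (Real.exp (c * r) * Real.exp (-β * Real.cosh r)))
      =o[atTop] (fun r : ℝ => Real.exp (-1 * r)) := by
    rw [Asymptotics.isLittleO_iff_tendsto (fun x h => absurd h (Real.exp_ne_zero _))]
    have h := (tendsto_aux (c + 1) β hβ).const_mul C
    rw [mul_zero] at h
    refine h.congr fun r => ?_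
    rw [mul_div_assoc]
    congr 1
    rw [eq_div_iff (Real.exp_ne_zero _), ← Real.exp_add, ← Real.exp_add, ← Real.exp_add,
      Real.exp_eq_exp]
    ring
  refine Asymptotics.IsBigO.trans ?_ hlo.isBigO
  rw [Asymptotics.isBigO_iff]
  refine ⟨1, ?_⟩
  filter_upwards [Filter.eventually_ge_atTop 0] with r hr
  rw [one_mul, Real.norm_eq_abs, Real.norm_eq_abs]
  exact (hb r hr).trans (le_abs_self _)

lemma cosh_le_exp' {x : ℝ} (hx : 0 ≤ x) : Real.cosh x ≤ Real.exp x := by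
  rw [Real.cosh_eq]
  have : Real.exp (-x) ≤ Real.exp x := Real.exp_le_exp.2 (by linarith)
  linarith

lemma abs_sinh_le_cosh (x : ℝ) : |Real.sinh x| ≤ Real.cosh x := by
  rw [Real.abs_sinh, ← Real.cosh_abs x]
  have := Real.cosh_sub_sinh |x|
  have := Real.exp_pos (-|x|)
  linarith

lemma integrableOn_cosh_mul (a β : ℝ) (ha : 0 ≤ a) (hβ : 0 < β) :
    IntegrableOn (fun r => Real.cosh (a * r) * Real.exp (-β * Real.cosh r)) (Set.Ioi 0) := by
  refine integrableOn_bound (c := a) (C := 1) hβ (by fun_prop) fun r hr => ?_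
  rw [one_mul, abs_of_nonneg (by positivity)]
  have h1 : Real.cosh (a * r) ≤ Real.exp (a * r) := cosh_le_exp' (by positivity)
  exact mul_le_mul_of_nonneg_right h1 (Real.exp_pos _).le

lemma integrableOn_cosh_cosh_mul (a β : ℝ) (ha : 0 ≤ a) (hβ : 0 < β) :
    IntegrableOn (fun r => Real.cosh (a * r) * Real.cosh r * Real.exp (-β * Real.cosh r))
      (Set.Ioi 0) := by
  refine integrableOn_bound (c := a + 1) (C := 1) hβ (by fun_prop) fun r hr => ?_
  rw [one_mul, abs_of_nonneg (by positivity)]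
  have h1 : Real.cosh (a * r) ≤ Real.exp (a * r) := cosh_le_exp' (by positivity)
  have h2 : Real.cosh r ≤ Real.exp r := cosh_le_exp' hr
  have h3 := Real.exp_pos (-β * Real.cosh r)
  have h4 : Real.exp (a * r) * Real.exp r = Real.exp ((a + 1) * r) := by
    rw [← Real.exp_add]; ring_nf
  have h5 : Real.cosh (a * r) * Real.cosh r ≤ Real.exp ((a + 1) * r) := by
    rw [← h4]
    exact mul_le_mul h1 h2 (Real.cosh_pos r).le (Real.exp_pos _).le
  exact mul_le_mul_of_nonneg_right h5 h3.le

lemma Kb_integrableOn (j : ℕ) {β : ℝ} (hβ : 0 < β) :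
    IntegrableOn (fun r => Real.cosh (j * r) * Real.exp (-β * Real.cosh r)) (Set.Ioi 0) :=
  integrableOn_cosh_mul j β (Nat.cast_nonneg j) hβ

lemma Kb_pos (j : ℕ) {β : ℝ} (hβ : 0 < β) : 0 < Kb j β := by
  rw [Kb, setIntegral_pos_iff_support_of_nonneg_ae]
  · have hs : Function.support (fun r => Real.cosh (j * r) * Real.exp (-β * Real.cosh r))
        = Set.univ := by
      ext r
      simp only [Function.mem_support, Set.mem_univ, iff_true]
      positivity
    rw [hs, Set.univ_inter]
    simp
  · filter_upwards with r
    positivity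
  · exact Kb_integrableOn j hβ

lemma Kb_mono {i j : ℕ} (hij : i ≤ j) {β : ℝ} (hβ : 0 < β) : Kb i β ≤ Kb j β := by
  rw [Kb, Kb]
  refine setIntegral_mono_on (Kb_integrableOn i hβ) (Kb_integrableOn j hβ)
    measurableSet_Ioi fun r hr => ?_
  have hr0 : 0 < r := hr
  have hc : Real.cosh (i * r) ≤ Real.cosh (j * r) := by
    rw [Real.cosh_le_cosh]
    rw [abs_of_nonneg (by positivity), abs_of_nonneg (by positivity)]
    have : (i : ℝ) ≤ j := Nat.cast_le.2 hij
    nlinarith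
  exact mul_le_mul_of_nonneg_right hc (Real.exp_pos _).le

lemma hasDerivAt_Kb (j : ℕ) {β : ℝ} (hβ : 0 < β) :
    HasDerivAt (Kb j)
      (-∫ r in Set.Ioi (0:ℝ), Real.cosh (j * r) * Real.cosh r * Real.exp (-β * Real.cosh r)) β := by
  have key := hasDerivAt_integral_of_dominated_loc_of_deriv_le
    (μ := volume.restrict (Set.Ioi (0:ℝ)))
    (F := fun x (r : ℝ) => Real.cosh (j * r) * Real.exp (-x * Real.cosh r))
    (F' := fun x (r : ℝ) => -(Real.cosh (j * r) * Real.cosh r * Real.exp (-x * Real.cosh r)))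
    (x₀ := β)
    (bound := fun r => Real.cosh (j * r) * Real.cosh r * Real.exp (-(β/2) * Real.cosh r))
    (Metric.ball_mem_nhds β (half_pos hβ))
    (Filter.Eventually.of_forall fun x => (by fun_prop : Continuous
        fun r : ℝ => Real.cosh (j * r) * Real.exp (-x * Real.cosh r)).aestronglyMeasurable)
    (Kb_integrableOn j hβ)
    ((by fun_prop : Continuous fun r : ℝ =>
        -(Real.cosh (j * r) * Real.cosh r * Real.exp (-β * Real.cosh r))).aestronglyMeasurable)
    (Filter.Eventually.of_forall fun r => fun x hx => ?_)
    (integrableOn_cosh_cosh_mul j (β/2) (Nat.cast_nonneg j) (half_pos hβ))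
    (Filter.Eventually.of_forall fun r => fun x hx => ?_)
  · have h2 := key.2
    rw [integral_neg] at h2
    exact h2
  · -- bound
    rw [Real.norm_eq_abs, abs_neg, abs_of_nonneg (by positivity)]
    have hx' : β / 2 ≤ x := by
      rw [Metric.mem_ball, Real.dist_eq, abs_lt] at hx
      linarith [hx.1]
    have : Real.exp (-x * Real.cosh r) ≤ Real.exp (-(β/2) * Real.cosh r) := by
      apply Real.exp_le_exp.2
      have := Real.cosh_pos r
      nlinarith
    have h0 : 0 ≤ Real.cosh (j * r) * Real.cosh r :=
      mul_nonneg (Real.cosh_pos _).le (Real.cosh_pos _).le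
    calc Real.cosh (j * r) * Real.cosh r * Real.exp (-x * Real.cosh r)
        ≤ Real.cosh (j * r) * Real.cosh r * Real.exp (-(β/2) * Real.cosh r) :=
          mul_le_mul_of_nonneg_left this h0
      _ = _ := by ring
  · -- differentiability
    have h1 : HasDerivAt (fun x : ℝ => -x * Real.cosh r) (-Real.cosh r) x := by
      simpa using ((hasDerivAt_id x).neg.mul_const (Real.cosh r))
    have h2 : HasDerivAt (fun x => Real.cosh (j * r) * Real.exp (-x * Real.cosh r)) _ x :=
      (h1.exp).const_mul (Real.cosh (j * r))
    exact h2.congr_deriv (by ring)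

lemma hasDerivAt_Kb1 {β : ℝ} (hβ : 0 < β) :
    HasDerivAt (Kb 1) (-((Kb 2 β + Kb 0 β) / 2)) β := by
  have h := hasDerivAt_Kb 1 hβ
  convert h using 2
  rw [Kb, Kb]
  push_cast
  rw [← integral_add (integrableOn_cosh_mul 2 β (by norm_num) hβ)
    (integrableOn_cosh_mul 0 β (by norm_num) hβ), ← integral_div]
  refine setIntegral_congr_fun measurableSet_Ioi fun r _ => ?_
  have h1 := Real.cosh_add r r
  have h2 := Real.cosh_sq_sub_sinh_sq r
  push_cast
  rw [show (2 : ℝ) * r = r + r by ring]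
  simp only [one_mul, zero_mul, Real.cosh_zero]
  nlinarith [Real.exp_pos (-β * Real.cosh r)]

lemma hasDerivAt_Kb2 {β : ℝ} (hβ : 0 < β) :
    HasDerivAt (Kb 2) (-((Kb 3 β + Kb 1 β) / 2)) β := by
  have h := hasDerivAt_Kb 2 hβ
  convert h using 2
  rw [Kb, Kb]
  push_cast
  rw [← integral_add (integrableOn_cosh_mul 3 β (by norm_num) hβ)
    (integrableOn_cosh_mul 1 β (by norm_num) hβ), ← integral_div]
  refine setIntegral_congr_fun measurableSet_Ioi fun r _ => ?_
  have h1 := Real.cosh_add (2 * r) r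
  have h2 := Real.cosh_sub (2 * r) r
  rw [show (2 : ℝ) * r + r = 3 * r by ring] at h1
  rw [show (2 : ℝ) * r - r = r by ring] at h2
  push_cast
  simp only [one_mul]
  nlinarith [Real.exp_pos (-β * Real.cosh r)]

lemma Kb_rec1 {β : ℝ} (hβ : 0 < β) : β * Kb 2 β = β * Kb 0 β + 2 * Kb 1 β := by
  set f' : ℝ → ℝ := fun r => Real.cosh (1 * r) * Real.exp (-β * Real.cosh r)
    - β / 2 * (Real.cosh (2 * r) * Real.exp (-β * Real.cosh r)
      - Real.cosh (0 * r) * Real.exp (-β * Real.cosh r)) with hf'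
  have hderiv : ∀ r ∈ Set.Ici (0:ℝ),
      HasDerivAt (fun r => Real.sinh r * Real.exp (-β * Real.cosh r)) (f' r) r := by
    intro r _
    have h1 : HasDerivAt (fun r => Real.sinh r * Real.exp (-β * Real.cosh r)) _ r :=
      (Real.hasDerivAt_sinh r).mul (((Real.hasDerivAt_cosh r).const_mul (-β)).exp)
    convert h1 using 1
    have h2 := Real.cosh_add r r
    have h3 := Real.cosh_sq_sub_sinh_sq r
    simp only [hf', one_mul, zero_mul, Real.cosh_zero]
    rw [show (2 : ℝ) * r = r + r by ring]
    linear_combination (-(β/2) * Real.exp (-β * Real.cosh r)) * h2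
      + (-(β/2) * Real.exp (-β * Real.cosh r)) * h3
  have i1 := integrableOn_cosh_mul 1 β zero_le_one hβ
  have i2 := integrableOn_cosh_mul 2 β (by norm_num) hβ
  have i0 := integrableOn_cosh_mul 0 β le_rfl hβ
  have i20 : IntegrableOn (fun r => Real.cosh (2 * r) * Real.exp (-β * Real.cosh r)
      - Real.cosh (0 * r) * Real.exp (-β * Real.cosh r)) (Set.Ioi 0) := i2.sub i0
  have ig : IntegrableOn (fun r => β / 2 * (Real.cosh (2 * r) * Real.exp (-β * Real.cosh r)
      - Real.cosh (0 * r) * Real.exp (-β * Real.cosh r))) (Set.Ioi 0) := i20.const_mul _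
  have hint : IntegrableOn f' (Set.Ioi 0) := i1.sub ig
  have htend : Filter.Tendsto (fun r => Real.sinh r * Real.exp (-β * Real.cosh r))
      Filter.atTop (nhds 0) := by
    refine squeeze_zero_norm' ?_ (tendsto_aux 1 β hβ)
    filter_upwards [Filter.eventually_ge_atTop 0] with r hr
    rw [Real.norm_eq_abs, abs_mul, abs_of_pos (Real.exp_pos _)]
    have := (abs_sinh_le_cosh r).trans (cosh_le_exp' hr)
    rw [one_mul]
    exact mul_le_mul_of_nonneg_right this (Real.exp_pos _).le
  have h0 := integral_Ioi_of_hasDerivAt_of_tendsto' hderiv hint htend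
  simp only [Real.sinh_zero, zero_mul, sub_zero] at h0
  simp only [hf'] at h0
  rw [integral_sub i1 ig, integral_const_mul, integral_sub i2 i0] at h0
  have e1 : (∫ r in Set.Ioi (0:ℝ), Real.cosh (1 * r) * Real.exp (-β * Real.cosh r)) = Kb 1 β := by
    rw [Kb]
    refine setIntegral_congr_fun measurableSet_Ioi fun r _ => ?_
    push_cast; ring
  have e2 : (∫ r in Set.Ioi (0:ℝ), Real.cosh (2 * r) * Real.exp (-β * Real.cosh r)) = Kb 2 β := by
    rw [Kb]
    refine setIntegral_congr_fun measurableSet_Ioi fun r _ => ?_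
    push_cast; ring
  have e0 : (∫ r in Set.Ioi (0:ℝ), Real.cosh (0 * r) * Real.exp (-β * Real.cosh r)) = Kb 0 β := by
    rw [Kb]
    refine setIntegral_congr_fun measurableSet_Ioi fun r _ => ?_
    push_cast; ring
  rw [e1, e2, e0] at h0
  linarith

lemma Kb_rec2 {β : ℝ} (hβ : 0 < β) : β * Kb 3 β = β * Kb 1 β + 4 * Kb 2 β := by
  set f' : ℝ → ℝ := fun r => 2 * (Real.cosh (2 * r) * Real.exp (-β * Real.cosh r))
    - β / 2 * (Real.cosh (3 * r) * Real.exp (-β * Real.cosh r)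
      - Real.cosh (1 * r) * Real.exp (-β * Real.cosh r)) with hf'
  have hderiv : ∀ r ∈ Set.Ici (0:ℝ),
      HasDerivAt (fun r => Real.sinh (2 * r) * Real.exp (-β * Real.cosh r)) (f' r) r := by
    intro r _
    have hs : HasDerivAt (fun r : ℝ => Real.sinh (2 * r)) (Real.cosh (2 * r) * 2) r := by
      simpa using ((hasDerivAt_id r).const_mul 2).sinh
    have h1 : HasDerivAt (fun r => Real.sinh (2 * r) * Real.exp (-β * Real.cosh r)) _ r :=
      hs.mul (((Real.hasDerivAt_cosh r).const_mul (-β)).exp)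
    convert h1 using 1
    have h2 := Real.cosh_add (2 * r) r
    have h3 := Real.cosh_sub (2 * r) r
    rw [show (2 : ℝ) * r + r = 3 * r by ring] at h2
    rw [show (2 : ℝ) * r - r = r by ring] at h3
    simp only [hf', one_mul]
    linear_combination (-(β/2) * Real.exp (-β * Real.cosh r)) * h2
      + ((β/2) * Real.exp (-β * Real.cosh r)) * h3
  have i1 := integrableOn_cosh_mul 1 β zero_le_one hβ
  have i2 := integrableOn_cosh_mul 2 β (by norm_num) hβ
  have i3 := integrableOn_cosh_mul 3 β (by norm_num) hβ
  have i2' : IntegrableOn (fun r => 2 * (Real.cosh (2 * r) * Real.exp (-β * Real.cosh r)))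
      (Set.Ioi 0) := i2.const_mul _
  have i31 : IntegrableOn (fun r => Real.cosh (3 * r) * Real.exp (-β * Real.cosh r)
      - Real.cosh (1 * r) * Real.exp (-β * Real.cosh r)) (Set.Ioi 0) := i3.sub i1
  have ig : IntegrableOn (fun r => β / 2 * (Real.cosh (3 * r) * Real.exp (-β * Real.cosh r)
      - Real.cosh (1 * r) * Real.exp (-β * Real.cosh r))) (Set.Ioi 0) := i31.const_mul _
  have hint : IntegrableOn f' (Set.Ioi 0) := i2'.sub ig
  have htend : Filter.Tendsto (fun r => Real.sinh (2 * r) * Real.exp (-β * Real.cosh r))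
      Filter.atTop (nhds 0) := by
    refine squeeze_zero_norm' ?_ (tendsto_aux 2 β hβ)
    filter_upwards [Filter.eventually_ge_atTop 0] with r hr
    rw [Real.norm_eq_abs, abs_mul, abs_of_pos (Real.exp_pos _)]
    have := (abs_sinh_le_cosh (2 * r)).trans (cosh_le_exp' (by positivity))
    exact mul_le_mul_of_nonneg_right this (Real.exp_pos _).le
  have h0 := integral_Ioi_of_hasDerivAt_of_tendsto' hderiv hint htend
  simp only [mul_zero, Real.sinh_zero, zero_mul, sub_zero] at h0
  simp only [hf'] at h0
  rw [integral_sub i2' ig, integral_const_mul, integral_const_mul, integral_sub i3 i1] at h0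
  have e1 : (∫ r in Set.Ioi (0:ℝ), Real.cosh (1 * r) * Real.exp (-β * Real.cosh r)) = Kb 1 β := by
    rw [Kb]
    refine setIntegral_congr_fun measurableSet_Ioi fun r _ => ?_
    push_cast; ring
  have e2 : (∫ r in Set.Ioi (0:ℝ), Real.cosh (2 * r) * Real.exp (-β * Real.cosh r)) = Kb 2 β := by
    rw [Kb]
    refine setIntegral_congr_fun measurableSet_Ioi fun r _ => ?_
    push_cast; ring
  have e3 : (∫ r in Set.Ioi (0:ℝ), Real.cosh (3 * r) * Real.exp (-β * Real.cosh r)) = Kb 3 β := by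
    rw [Kb]
    refine setIntegral_congr_fun measurableSet_Ioi fun r _ => ?_
    push_cast; ring
  rw [e1, e2, e3] at h0
  linarith

/-- for `0 < β < 2`, `(K₁/K₂)'(β) ≥ (2 − β)/(β + 2)² > 0`. -/
theorem deriv_K1_div_K2_lower_bound (β : ℝ) (hβ0 : 0 < β) (hβ2 : β < 2) :
    (2 - β) / (β + 2) ^ 2 ≤ deriv (fun β => Kb 1 β / Kb 2 β) β ∧
      0 < (2 - β) / (β + 2) ^ 2 := by
  have hK0 := Kb_pos 0 hβ0
  have hK1 := Kb_pos 1 hβ0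
  have hK2 := Kb_pos 2 hβ0
  have hK3 := Kb_pos 3 hβ0
  have h01 : Kb 0 β ≤ Kb 1 β := Kb_mono (by norm_num) hβ0
  have hr1 := Kb_rec1 hβ0
  have hr2 := Kb_rec2 hβ0
  have hdd := (hasDerivAt_Kb1 hβ0).fun_div (hasDerivAt_Kb2 hβ0) hK2.ne'
  constructor
  · rw [hdd.deriv]
    rw [div_le_div_iff₀ (by positivity) (pow_pos hK2 2)]
    refine le_of_mul_le_mul_right ?_ hβ0
    have hu : 0 ≤ (β + 2) * Kb 1 β - β * Kb 2 β := by
      nlinarith [mul_nonneg hβ0.le (sub_nonneg.2 h01)]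
    have hid : (-((Kb 2 β + Kb 0 β) / 2) * Kb 2 β - Kb 1 β * -((Kb 3 β + Kb 1 β) / 2))
          * (β + 2) ^ 2 * β
        = (2 - β) * Kb 2 β ^ 2 * β + β * ((β + 2) * Kb 1 β - β * Kb 2 β) ^ 2
          + (2 * β ^ 2 + 3 * β + 6) * Kb 2 β * ((β + 2) * Kb 1 β - β * Kb 2 β) := by
      linear_combination ((β + 2) ^ 2 * Kb 2 β / 2) * hr1 + ((β + 2) ^ 2 * Kb 1 β / 2) * hr2
    have hsq : 0 ≤ β * ((β + 2) * Kb 1 β - β * Kb 2 β) ^ 2 :=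
      mul_nonneg hβ0.le (sq_nonneg _)
    have hlin : 0 ≤ (2 * β ^ 2 + 3 * β + 6) * Kb 2 β * ((β + 2) * Kb 1 β - β * Kb 2 β) :=
      mul_nonneg (mul_nonneg (by positivity) hK2.le) hu
    linarith
  · exact div_pos (by linarith) (by positivity)
end
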